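/- arXiv:2604.23022 — 4 statements merged into one kernel-verified Lean document; each statement's English description precedes it below -/
import Mathlib

section
/- Let Π be a nonempty finite set, let V, B, V̂, B̂ : Π → ℝ with B(π) ≥ 0 for every π ∈ Π, let λ ≥ 0, and let ε_V, ε_B ≥ 0 satisfy |V̂(π) − V(π)| ≤ ε_V and |B̂(π) − B(π)| ≤ ε_B for every π ∈ Π. If π* maximizes V over Π and π̂ maximizes Ĵ_λ(π) = V̂(π) − λ B̂(π) over Π, then V(π*) − V(π̂) ≤ λ B(π*) + 2 ε_V + 2 λ ε_B. -/
/-- **Uniform-selection reduction.**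
If the value and burden estimates are uniformly accurate to within `εV` and `εB`
over a finite nonempty policy library, `pstar` maximizes the true value `V`, and
`phat` maximizes the empirical penalized objective `Ĵ_λ(π) = V̂(π) - λ B̂(π)`,
then `V(pstar) - V(phat) ≤ λ B(pstar) + 2 εV + 2 λ εB`. -/
theorem stmt6 {Pol : Type*} [Fintype Pol] [Nonempty Pol]
    (V B Vhat Bhat : Pol → ℝ) (hB : ∀ p, 0 ≤ B p)
    (lam : ℝ) (hlam : 0 ≤ lam)
    (εV εB : ℝ) (hεV : 0 ≤ εV) (hεB : 0 ≤ εB)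
    (hVacc : ∀ p, |Vhat p - V p| ≤ εV)
    (hBacc : ∀ p, |Bhat p - B p| ≤ εB)
    (pstar phat : Pol)
    (hstar : ∀ p, V p ≤ V pstar)
    (hhat : ∀ p, Vhat p - lam * Bhat p ≤ Vhat phat - lam * Bhat phat) :
    V pstar - V phat ≤ lam * B pstar + 2 * εV + 2 * lam * εB := by
  have h1 := abs_le.1 (hVacc pstar)
  have h2 := abs_le.1 (hVacc phat)
  have h3 := abs_le.1 (hBacc pstar)
  have h4 := abs_le.1 (hBacc phat)
  have h5 := hhat pstar
  have h6 := hB phat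
  nlinarith [mul_le_mul_of_nonneg_left h3.2 hlam, mul_le_mul_of_nonneg_left h4.1 hlam]
end

section
/- Let π be a feasible policy, let q̂ : 𝒳 × A1 × A2 → ℝ be a fixed bounded measurable function, suppose the reward regression q is bounded and Y has E[Y | X, A1, A2] = q(X, A1, A2), and suppose the coupled importance ratio w_π(X, A1, A2) is essentially bounded (for instance because the behavior propensities are bounded below by some ν > 0 on the feasible support). Define the plug-in term m_{q̂}(x; π) = Σ_{a1∈A1} π1(a1|x) Σ_{a2∈S(x,a1)} π2(a2|x, a1) q̂(x, a1, a2) and the doubly robust score ψ_π(O; q̂) = m_{q̂}(X; π) + w_π(X, A1, A2) · (Y − q̂(X, A1, A2)). Then E[ ψ_π(O; q̂) ] = V(π), where V(π) is the value of π under q. -/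
open MeasureTheory ProbabilityTheory

private lemma hIbd_aux {α : Type*} [MeasurableSpace α] (ν : MeasureTheory.Measure α)
    [MeasureTheory.IsFiniteMeasure ν] (f : α → ℝ) (C : ℝ) (hf : Measurable f)
    (hC : ∀ a, |f a| ≤ C) : MeasureTheory.Integrable f ν :=
  ⟨hf.aestronglyMeasurable,
    MeasureTheory.HasFiniteIntegral.of_bounded (C := C)
      (Filter.Eventually.of_forall fun a => by simpa [Real.norm_eq_abs] using hC a)⟩

private lemma sum_integral_swap {α ι κ : Type*} [MeasurableSpace α] [Fintype ι] [Fintype κ]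
    (ν : MeasureTheory.Measure α) (F : ι → κ → α → ℝ)
    (hF : ∀ i j, MeasureTheory.Integrable (F i j) ν) :
    ∑ i, ∑ j, ∫ a, F i j a ∂ν = ∫ a, ∑ i, ∑ j, F i j a ∂ν := by
  rw [MeasureTheory.integral_finset_sum _
    (fun i _ => MeasureTheory.integrable_finset_sum _ fun j _ => hF i j)]
  exact Finset.sum_congr rfl fun i _ =>
    (MeasureTheory.integral_finset_sum _ fun j _ => hF i j).symm

set_option maxHeartbeats 1000000 in
/-- **Unbiasedness of the doubly robust score.**
Let `π` be a feasible policy, `q̂` a fixed bounded measurable reward model, `q`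
a bounded measurable reward regression, and `O = (X, A1, A2, Y)` a logged
observation with `X ∼ P`, `A1 ∼ μ1(·|X)`, `A2 ∼ μ2(·|X,A1)` and
`E[Y | X, A1, A2] = q(X, A1, A2)` (both encoded by the law hypotheses `hlaw`
and `hlawY`), with `Y` integrable. Suppose the coupled importance ratio
`w_π(X, A1, A2)` is essentially bounded. Then the doubly robust score
`ψ_π(O; q̂) = m_q̂(X; π) + w_π(X,A1,A2) (Y - q̂(X,A1,A2))` has expectation
`V(π)`, the value of `π` under `q`. -/
theorem stmt7
    {𝒳 : Type*} [m𝒳 : MeasurableSpace 𝒳] (P : Measure 𝒳) [IsProbabilityMeasure P]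
    {A1 A2 : Type*} [Fintype A1] [Nonempty A1] [Fintype A2] [Nonempty A2]
    [DecidableEq A1] [DecidableEq A2]
    [MeasurableSpace A1] [MeasurableSingletonClass A1]
    [MeasurableSpace A2] [MeasurableSingletonClass A2]
    (S : 𝒳 → A1 → Finset A2) (hS : ∀ x a1, (S x a1).Nonempty)
    (hSmeas : ∀ (a1 : A1) (a2 : A2), MeasurableSet {x | a2 ∈ S x a1})
    (π1 : 𝒳 → A1 → ℝ) (π2 : 𝒳 → A1 → A2 → ℝ)
    (hπ1meas : ∀ a1, Measurable fun x => π1 x a1)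
    (hπ2meas : ∀ a1 a2, Measurable fun x => π2 x a1 a2)
    (hπ1nn : ∀ x a1, 0 ≤ π1 x a1) (hπ1sum : ∀ x, ∑ a1, π1 x a1 = 1)
    (hπ2nn : ∀ x a1 a2, 0 ≤ π2 x a1 a2) (hπ2sum : ∀ x a1, ∑ a2, π2 x a1 a2 = 1)
    (hπ2supp : ∀ x a1 a2, a2 ∉ S x a1 → π2 x a1 a2 = 0)
    (μ1 : 𝒳 → A1 → ℝ) (μ2 : 𝒳 → A1 → A2 → ℝ)
    (hμ1meas : ∀ a1, Measurable fun x => μ1 x a1)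
    (hμ2meas : ∀ a1 a2, Measurable fun x => μ2 x a1 a2)
    (hμ1nn : ∀ x a1, 0 ≤ μ1 x a1) (hμ1sum : ∀ x, ∑ a1, μ1 x a1 = 1)
    (hμ2nn : ∀ x a1 a2, 0 ≤ μ2 x a1 a2) (hμ2sum : ∀ x a1, ∑ a2, μ2 x a1 a2 = 1)
    (hμ2supp : ∀ x a1 a2, a2 ∉ S x a1 → μ2 x a1 a2 = 0)
    (hμ1pos : ∀ x a1, 0 < μ1 x a1)
    (hμ2pos : ∀ x a1 a2, a2 ∈ S x a1 → 0 < μ2 x a1 a2)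
    (q : 𝒳 → A1 → A2 → ℝ)
    (hqmeas : ∀ a1 a2, Measurable fun x => q x a1 a2)
    (Cq : ℝ) (hqbd : ∀ x a1 a2, |q x a1 a2| ≤ Cq)
    (qhat : 𝒳 → A1 → A2 → ℝ)
    (hqhatmeas : ∀ a1 a2, Measurable fun x => qhat x a1 a2)
    (Cqhat : ℝ) (hqhatbd : ∀ x a1 a2, |qhat x a1 a2| ≤ Cqhat)
    {Ω : Type*} [MeasurableSpace Ω] (Q : Measure Ω) [IsProbabilityMeasure Q]
    (X : Ω → 𝒳) (A1v : Ω → A1) (A2v : Ω → A2) (Y : Ω → ℝ)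
    (hX : Measurable X) (hA1v : Measurable A1v) (hA2v : Measurable A2v)
    (hYm : Measurable Y) (hYint : Integrable Y Q)
    (hlaw : ∀ (a1 : A1) (a2 : A2) (h : 𝒳 → ℝ), Measurable h →
      (∃ C, ∀ x, |h x| ≤ C) →
      ∫ ω, (if A1v ω = a1 ∧ A2v ω = a2 then h (X ω) else 0) ∂Q
        = ∫ x, μ1 x a1 * μ2 x a1 a2 * h x ∂P)
    (hlawY : ∀ (a1 : A1) (a2 : A2) (h : 𝒳 → ℝ), Measurable h →
      (∃ C, ∀ x, |h x| ≤ C) →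
      ∫ ω, (if A1v ω = a1 ∧ A2v ω = a2 then Y ω * h (X ω) else 0) ∂Q
        = ∫ x, μ1 x a1 * μ2 x a1 a2 * q x a1 a2 * h x ∂P)
    (Cw : ℝ)
    (hwbd : ∀ᵐ ω ∂Q, |π1 (X ω) (A1v ω) * π2 (X ω) (A1v ω) (A2v ω) /
      (μ1 (X ω) (A1v ω) * μ2 (X ω) (A1v ω) (A2v ω))| ≤ Cw) :
    ∫ ω, ((∑ a1, π1 (X ω) a1 *
        ∑ a2 ∈ S (X ω) a1, π2 (X ω) a1 a2 * qhat (X ω) a1 a2) +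
      π1 (X ω) (A1v ω) * π2 (X ω) (A1v ω) (A2v ω) /
        (μ1 (X ω) (A1v ω) * μ2 (X ω) (A1v ω) (A2v ω)) *
        (Y ω - qhat (X ω) (A1v ω) (A2v ω))) ∂Q
      = ∫ x, ∑ a1, π1 x a1 * ∑ a2 ∈ S x a1, π2 x a1 a2 * q x a1 a2 ∂P := by
  classical
  -- Abbreviations
  set w : 𝒳 → A1 → A2 → ℝ :=
    fun x a1 a2 => π1 x a1 * π2 x a1 a2 / (μ1 x a1 * μ2 x a1 a2) with hwdef
  set w' : 𝒳 → A1 → A2 → ℝ :=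
    fun x a1 a2 => max (-Cw) (min Cw (w x a1 a2)) with hw'def
  set m : 𝒳 → ℝ := fun x => ∑ a1, π1 x a1 * ∑ a2, π2 x a1 a2 * qhat x a1 a2 with hmdef
  set V : 𝒳 → ℝ := fun x => ∑ a1, π1 x a1 * ∑ a2, π2 x a1 a2 * q x a1 a2 with hVdef
  -- replace the support sums by full sums
  have hSsum : ∀ (g : 𝒳 → A1 → A2 → ℝ) (x : 𝒳) (a1 : A1),
      ∑ a2 ∈ S x a1, π2 x a1 a2 * g x a1 a2 = ∑ a2, π2 x a1 a2 * g x a1 a2 := by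
    intro g x a1
    exact Finset.sum_subset (Finset.subset_univ (S x a1))
      (f := fun a2 => π2 x a1 a2 * g x a1 a2)
      (fun a2 _ h => by simp only [hπ2supp x a1 a2 h, zero_mul])
  simp only [hSsum qhat, hSsum q]
  show ∫ ω, (m (X ω) + w (X ω) (A1v ω) (A2v ω) * (Y ω - qhat (X ω) (A1v ω) (A2v ω))) ∂Q
      = ∫ x, V x ∂P
  -- basic measurability
  have hwmeas : ∀ a1 a2, Measurable fun x => w x a1 a2 := fun a1 a2 =>
    ((hπ1meas a1).mul (hπ2meas a1 a2)).div ((hμ1meas a1).mul (hμ2meas a1 a2))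
  have hw'meas : ∀ a1 a2, Measurable fun x => w' x a1 a2 := fun a1 a2 =>
    measurable_const.max (measurable_const.min (hwmeas a1 a2))
  have hmmeas : Measurable m :=
    Finset.measurable_sum _ fun a1 _ => (hπ1meas a1).mul
      (Finset.measurable_sum _ fun a2 _ => (hπ2meas a1 a2).mul (hqhatmeas a1 a2))
  have hVmeas : Measurable V :=
    Finset.measurable_sum _ fun a1 _ => (hπ1meas a1).mul
      (Finset.measurable_sum _ fun a2 _ => (hπ2meas a1 a2).mul (hqmeas a1 a2))
  haveI : (ae Q).NeBot := ae_neBot.2 (IsProbabilityMeasure.ne_zero Q)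
  have hCw : 0 ≤ Cw := by
    obtain ⟨ω, hω⟩ := hwbd.exists
    exact le_trans (abs_nonneg _) hω
  have hw'bd : ∀ x a1 a2, |w' x a1 a2| ≤ Cw := fun x a1 a2 =>
    abs_le.2 ⟨le_max_left _ _, max_le (by linarith) (min_le_left _ _)⟩
  have hw'eq : ∀ x a1 a2, |w x a1 a2| ≤ Cw → w' x a1 a2 = w x a1 a2 := by
    intro x a1 a2 h
    rw [abs_le] at h
    simp only [hw'def]
    rw [min_eq_right h.2, max_eq_right h.1]
  -- boundedness of m and V
  have hbd_aux : ∀ (g : 𝒳 → A1 → A2 → ℝ) (Cg : ℝ), (∀ x a1 a2, |g x a1 a2| ≤ Cg) →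
      ∀ x, |∑ a1, π1 x a1 * ∑ a2, π2 x a1 a2 * g x a1 a2| ≤ Cg := by
    intro g Cg hg x
    have h1 : ∀ a1, |∑ a2, π2 x a1 a2 * g x a1 a2| ≤ Cg := by
      intro a1
      calc |∑ a2, π2 x a1 a2 * g x a1 a2| ≤ ∑ a2, |π2 x a1 a2 * g x a1 a2| :=
            Finset.abs_sum_le_sum_abs _ _
        _ ≤ ∑ a2, π2 x a1 a2 * Cg := by
            refine Finset.sum_le_sum fun a2 _ => ?_
            rw [abs_mul, abs_of_nonneg (hπ2nn x a1 a2)]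
            exact mul_le_mul_of_nonneg_left (hg x a1 a2) (hπ2nn x a1 a2)
        _ = Cg := by rw [← Finset.sum_mul, hπ2sum, one_mul]
    calc |∑ a1, π1 x a1 * ∑ a2, π2 x a1 a2 * g x a1 a2|
        ≤ ∑ a1, |π1 x a1 * ∑ a2, π2 x a1 a2 * g x a1 a2| := Finset.abs_sum_le_sum_abs _ _
      _ ≤ ∑ a1, π1 x a1 * Cg := by
          refine Finset.sum_le_sum fun a1 _ => ?_
          rw [abs_mul, abs_of_nonneg (hπ1nn x a1)]
          exact mul_le_mul_of_nonneg_left (h1 a1) (hπ1nn x a1)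
      _ = Cg := by rw [← Finset.sum_mul, hπ1sum, one_mul]
  have hmbd : ∀ x, |m x| ≤ Cqhat := hbd_aux qhat Cqhat hqhatbd
  have hVbd : ∀ x, |V x| ≤ Cq := hbd_aux q Cq hqbd
  -- π1, π2 are at most 1
  have hπ1le : ∀ x a1, π1 x a1 ≤ 1 := fun x a1 => by
    calc π1 x a1 ≤ ∑ b, π1 x b :=
          Finset.single_le_sum (fun b _ => hπ1nn x b) (Finset.mem_univ a1)
      _ = 1 := hπ1sum x
  have hπ2le : ∀ x a1 a2, π2 x a1 a2 ≤ 1 := fun x a1 a2 => by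
    calc π2 x a1 a2 ≤ ∑ b, π2 x a1 b :=
          Finset.single_le_sum (fun b _ => hπ2nn x a1 b) (Finset.mem_univ a2)
      _ = 1 := hπ2sum x a1
  have hπprodbd : ∀ (g : 𝒳 → A1 → A2 → ℝ) (Cg : ℝ), (∀ x a1 a2, |g x a1 a2| ≤ Cg) →
      ∀ (a1 : A1) (a2 : A2) (x : 𝒳), |π1 x a1 * π2 x a1 a2 * g x a1 a2| ≤ Cg := by
    intro g Cg hg a1 a2 x
    have h0 : 0 ≤ Cg := le_trans (abs_nonneg _) (hg x a1 a2)
    have : |π1 x a1 * π2 x a1 a2 * g x a1 a2|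
        = π1 x a1 * π2 x a1 a2 * |g x a1 a2| := by
      rw [abs_mul, abs_mul, abs_of_nonneg (hπ1nn x a1), abs_of_nonneg (hπ2nn x a1 a2)]
    rw [this]
    have hle1 : π1 x a1 * π2 x a1 a2 ≤ 1 :=
      mul_le_one₀ (hπ1le x a1) (hπ2nn x a1 a2) (hπ2le x a1 a2)
    calc π1 x a1 * π2 x a1 a2 * |g x a1 a2| ≤ 1 * Cg := by
          exact mul_le_mul hle1 (hg x a1 a2) (abs_nonneg _)
            (by linarith)
      _ = Cg := one_mul Cg
  -- the ratio is a.e. (w.r.t. P) bounded by Cw, for each (a1, a2)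
  have hae : ∀ a1 a2, ∀ᵐ x ∂P, |w x a1 a2| ≤ Cw := by
    intro a1 a2
    set B : Set 𝒳 := {x | Cw < |w x a1 a2|} with hBdef
    have hBmeas : MeasurableSet B := measurableSet_lt measurable_const (hwmeas a1 a2).abs
    have hind := hlaw a1 a2 (fun x => if x ∈ B then (1:ℝ) else 0)
      (Measurable.ite hBmeas measurable_const measurable_const)
      ⟨1, fun x => by by_cases hx : x ∈ B <;> simp [hx]⟩
    have hzero : ∫ ω, (if A1v ω = a1 ∧ A2v ω = a2 then
        (if X ω ∈ B then (1:ℝ) else 0) else 0) ∂Q = 0 := by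
      have hnull : (fun ω => if A1v ω = a1 ∧ A2v ω = a2 then
          (if X ω ∈ B then (1:ℝ) else 0) else 0) =ᵐ[Q] 0 := by
        filter_upwards [hwbd] with ω hω
        by_cases h1 : A1v ω = a1 ∧ A2v ω = a2
        · have hx : X ω ∉ B := by
            intro hxB
            rw [hBdef] at hxB
            simp only [Set.mem_setOf_eq, ← h1.1, ← h1.2] at hxB
            exact absurd hω (not_le.2 hxB)
          simp [h1, hx]
        · simp [h1]
      exact integral_eq_zero_of_ae hnull
    have hP0 : ∫ x, μ1 x a1 * μ2 x a1 a2 * (if x ∈ B then (1:ℝ) else 0) ∂P = 0 := by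
      rw [← hind, hzero]
    have hint : Integrable
        (fun x => μ1 x a1 * μ2 x a1 a2 * (if x ∈ B then (1:ℝ) else 0)) P := by
      refine hIbd_aux P _ 1 ?_ fun x => ?_
      · exact ((hμ1meas a1).mul (hμ2meas a1 a2)).mul
          (Measurable.ite hBmeas measurable_const measurable_const)
      by_cases hx : x ∈ B
      · simp only [hx, if_true, mul_one]
        rw [abs_mul, abs_of_nonneg (hμ1nn x a1), abs_of_nonneg (hμ2nn x a1 a2)]
        have h1 : μ1 x a1 ≤ 1 := by
          calc μ1 x a1 ≤ ∑ b, μ1 x b :=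
                Finset.single_le_sum (fun b _ => hμ1nn x b) (Finset.mem_univ a1)
            _ = 1 := hμ1sum x
        have h2 : μ2 x a1 a2 ≤ 1 := by
          calc μ2 x a1 a2 ≤ ∑ b, μ2 x a1 b :=
                Finset.single_le_sum (fun b _ => hμ2nn x a1 b) (Finset.mem_univ a2)
            _ = 1 := hμ2sum x a1
        exact mul_le_one₀ h1 (hμ2nn x a1 a2) h2
      · simp [hx]
    have hnn : (0 : 𝒳 → ℝ) ≤
        fun x => μ1 x a1 * μ2 x a1 a2 * (if x ∈ B then (1:ℝ) else 0) := by
      intro x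
      have : (0:ℝ) ≤ if x ∈ B then (1:ℝ) else 0 := by split <;> norm_num
      exact mul_nonneg (mul_nonneg (hμ1nn x a1) (hμ2nn x a1 a2)) this
    have haez := (integral_eq_zero_iff_of_nonneg hnn hint).1 hP0
    filter_upwards [haez] with x hx
    by_contra hcon
    push_neg at hcon
    have hxB : x ∈ B := hcon
    simp only [Pi.zero_apply, hxB, if_true, mul_one] at hx
    have hw0 : w x a1 a2 = 0 := by
      simp only [hwdef]
      rw [hx, div_zero]
    rw [hw0, abs_zero] at hcon
    exact absurd hCw (not_le.2 hcon)
  -- key a.e. identity on P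
  have hmuw : ∀ a1 a2, ∀ᵐ x ∂P,
      μ1 x a1 * μ2 x a1 a2 * w' x a1 a2 = π1 x a1 * π2 x a1 a2 := by
    intro a1 a2
    filter_upwards [hae a1 a2] with x hx
    rw [hw'eq x a1 a2 hx]
    by_cases h0 : μ1 x a1 * μ2 x a1 a2 = 0
    · have hμ20 : μ2 x a1 a2 = 0 := by
        rcases mul_eq_zero.1 h0 with h | h
        · exact absurd h (ne_of_gt (hμ1pos x a1))
        · exact h
      have ha2 : a2 ∉ S x a1 := fun hm => absurd hμ20 (ne_of_gt (hμ2pos x a1 a2 hm))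
      rw [h0, zero_mul, hπ2supp x a1 a2 ha2, mul_zero]
    · show μ1 x a1 * μ2 x a1 a2 * (π1 x a1 * π2 x a1 a2 / (μ1 x a1 * μ2 x a1 a2)) = _
      rw [mul_comm, div_mul_cancel₀ _ h0]
  -- sum-collapsing identity
  have hcollapse : ∀ (ω : Ω) (F : A1 → A2 → ℝ),
      (∑ a1, ∑ a2, if A1v ω = a1 ∧ A2v ω = a2 then F a1 a2 else 0)
        = F (A1v ω) (A2v ω) := by
    intro ω F
    rw [Fintype.sum_eq_single (A1v ω) (fun b hb => Finset.sum_eq_zero fun a2 _ => by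
      simp [Ne.symm hb])]
    rw [Fintype.sum_eq_single (A2v ω) (fun b hb => by simp [Ne.symm hb])]
    simp
  -- integrability facts on Q
  have hcond : ∀ (a1 : A1) (a2 : A2), MeasurableSet {ω | A1v ω = a1 ∧ A2v ω = a2} :=
    fun a1 a2 => (hA1v (measurableSet_singleton a1)).inter (hA2v (measurableSet_singleton a2))
  have hintm : Integrable (fun ω => m (X ω)) Q :=
    hIbd_aux Q _ Cqhat ((hmmeas.comp hX : Measurable fun ω => m (X ω))) fun ω => hmbd (X ω)
  have hintT1 : ∀ a1 a2, Integrable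
      (fun ω => if A1v ω = a1 ∧ A2v ω = a2 then Y ω * w' (X ω) a1 a2 else 0) Q := by
    intro a1 a2
    refine Integrable.mono (hYint.const_mul Cw) ?_ ?_
    · exact (Measurable.ite (hcond a1 a2) (hYm.mul ((hw'meas a1 a2).comp hX))
        measurable_const).aestronglyMeasurable
    · refine Filter.Eventually.of_forall fun ω => ?_
      simp only [Real.norm_eq_abs]
      by_cases h1 : A1v ω = a1 ∧ A2v ω = a2
      · simp only [h1, and_self, if_true]
        rw [abs_mul, abs_mul, abs_of_nonneg hCw, mul_comm Cw |Y ω|]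
        exact mul_le_mul_of_nonneg_left (hw'bd (X ω) a1 a2) (abs_nonneg _)
      · simp only [h1, if_false, abs_zero, abs_mul, abs_of_nonneg hCw]
        positivity
  have hintT2 : ∀ a1 a2, Integrable
      (fun ω => if A1v ω = a1 ∧ A2v ω = a2 then
        w' (X ω) a1 a2 * qhat (X ω) a1 a2 else 0) Q := by
    intro a1 a2
    refine hIbd_aux Q _ (Cw * Cqhat) (Measurable.ite (hcond a1 a2)
      (((hw'meas a1 a2).comp hX).mul ((hqhatmeas a1 a2).comp hX)) measurable_const)
      fun ω => ?_
    have h0 : 0 ≤ Cqhat := le_trans (abs_nonneg _) (hqhatbd (X ω) a1 a2)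
    by_cases h1 : A1v ω = a1 ∧ A2v ω = a2
    · simp only [h1, and_self, if_true]
      rw [abs_mul]
      exact mul_le_mul (hw'bd _ _ _) (hqhatbd _ _ _) (abs_nonneg _) hCw
    · simp only [h1, if_false, abs_zero]
      positivity
  have hintT : ∀ a1 a2, Integrable
      (fun ω => if A1v ω = a1 ∧ A2v ω = a2 then
        Y ω * w' (X ω) a1 a2 - w' (X ω) a1 a2 * qhat (X ω) a1 a2 else 0) Q := by
    intro a1 a2
    refine ((hintT1 a1 a2).sub (hintT2 a1 a2)).congr
      (Filter.Eventually.of_forall fun ω => ?_)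
    by_cases h1 : A1v ω = a1 ∧ A2v ω = a2 <;> simp [h1]
  -- pointwise (a.e.) decomposition of the integrand
  have hptw : (fun ω => m (X ω) + w (X ω) (A1v ω) (A2v ω) *
        (Y ω - qhat (X ω) (A1v ω) (A2v ω)))
      =ᵐ[Q] fun ω => m (X ω) + ∑ a1, ∑ a2,
        (if A1v ω = a1 ∧ A2v ω = a2 then
          Y ω * w' (X ω) a1 a2 - w' (X ω) a1 a2 * qhat (X ω) a1 a2 else 0) := by
    filter_upwards [hwbd] with ω hω
    rw [hcollapse ω (fun a1 a2 => Y ω * w' (X ω) a1 a2 - w' (X ω) a1 a2 * qhat (X ω) a1 a2)]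
    rw [hw'eq _ _ _ hω]
    ring
  -- compute the Q-integral of m ∘ X
  have hmQ : ∫ ω, m (X ω) ∂Q = ∫ x, m x ∂P := by
    have hintif : ∀ (a1 : A1) (a2 : A2), Integrable
        (fun ω => if A1v ω = a1 ∧ A2v ω = a2 then m (X ω) else 0) Q := by
      intro a1 a2
      refine hIbd_aux Q _ Cqhat ?_ fun ω => ?_
      · exact Measurable.ite (hcond a1 a2)
          (hmmeas.comp hX : Measurable fun ω => m (X ω)) measurable_const
      · have h0 : 0 ≤ Cqhat := le_trans (abs_nonneg _) (hmbd (X ω))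
        by_cases h1 : A1v ω = a1 ∧ A2v ω = a2
        · simp only [h1, and_self, if_true]; exact hmbd (X ω)
        · simp only [h1, if_false, abs_zero]; exact h0
    have h1 : ∫ ω, m (X ω) ∂Q = ∑ a1, ∑ a2,
        ∫ ω, (if A1v ω = a1 ∧ A2v ω = a2 then m (X ω) else 0) ∂Q := by
      rw [sum_integral_swap Q
        (fun a1 a2 ω => if A1v ω = a1 ∧ A2v ω = a2 then m (X ω) else 0) hintif]
      refine integral_congr_ae (Filter.Eventually.of_forall fun ω => ?_)
      exact (hcollapse ω fun _ _ => m (X ω)).symm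
    rw [h1]
    have h2 : ∀ (a1 : A1) (a2 : A2),
        ∫ ω, (if A1v ω = a1 ∧ A2v ω = a2 then m (X ω) else 0) ∂Q
          = ∫ x, μ1 x a1 * μ2 x a1 a2 * m x ∂P :=
      fun a1 a2 => hlaw a1 a2 m hmmeas ⟨Cqhat, hmbd⟩
    simp only [h2]
    have hintmu : ∀ (a1 : A1) (a2 : A2), Integrable
        (fun x => μ1 x a1 * μ2 x a1 a2 * m x) P := by
      intro a1 a2
      refine hIbd_aux P _ Cqhat ?_ fun x => ?_
      · exact ((hμ1meas a1).mul (hμ2meas a1 a2)).mul hmmeas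
      · rw [abs_mul, abs_mul, abs_of_nonneg (hμ1nn x a1), abs_of_nonneg (hμ2nn x a1 a2)]
        have hμ1le : μ1 x a1 ≤ 1 := by
          calc μ1 x a1 ≤ ∑ b, μ1 x b :=
                Finset.single_le_sum (fun b _ => hμ1nn x b) (Finset.mem_univ a1)
            _ = 1 := hμ1sum x
        have hμ2le : μ2 x a1 a2 ≤ 1 := by
          calc μ2 x a1 a2 ≤ ∑ b, μ2 x a1 b :=
                Finset.single_le_sum (fun b _ => hμ2nn x a1 b) (Finset.mem_univ a2)
            _ = 1 := hμ2sum x a1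
        calc μ1 x a1 * μ2 x a1 a2 * |m x| ≤ 1 * Cqhat := by
              refine mul_le_mul ?_ (hmbd x) (abs_nonneg _) zero_le_one
              exact mul_le_one₀ hμ1le (hμ2nn x a1 a2) hμ2le
          _ = Cqhat := one_mul _
    rw [sum_integral_swap P (fun a1 a2 x => μ1 x a1 * μ2 x a1 a2 * m x) hintmu]
    refine integral_congr_ae (Filter.Eventually.of_forall fun x => ?_)
    show ∑ a1, ∑ a2, μ1 x a1 * μ2 x a1 a2 * m x = m x
    have h3 : ∀ a1 : A1, ∑ a2, μ1 x a1 * μ2 x a1 a2 * m x = μ1 x a1 * m x := by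
      intro a1
      rw [← Finset.sum_mul, ← Finset.mul_sum, hμ2sum, mul_one]
    rw [Finset.sum_congr rfl fun a1 _ => h3 a1, ← Finset.sum_mul, hμ1sum, one_mul]
  -- per-(a1,a2) term computation
  have hterm : ∀ (a1 : A1) (a2 : A2),
      ∫ ω, (if A1v ω = a1 ∧ A2v ω = a2 then
          Y ω * w' (X ω) a1 a2 - w' (X ω) a1 a2 * qhat (X ω) a1 a2 else 0) ∂Q
        = ∫ x, π1 x a1 * π2 x a1 a2 * q x a1 a2 ∂P
          - ∫ x, π1 x a1 * π2 x a1 a2 * qhat x a1 a2 ∂P := by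
    intro a1 a2
    have hsplit : ∫ ω, (if A1v ω = a1 ∧ A2v ω = a2 then
        Y ω * w' (X ω) a1 a2 - w' (X ω) a1 a2 * qhat (X ω) a1 a2 else 0) ∂Q
        = (∫ ω, (if A1v ω = a1 ∧ A2v ω = a2 then Y ω * w' (X ω) a1 a2 else 0) ∂Q)
          - ∫ ω, (if A1v ω = a1 ∧ A2v ω = a2 then
              w' (X ω) a1 a2 * qhat (X ω) a1 a2 else 0) ∂Q := by
      rw [← integral_sub (hintT1 a1 a2) (hintT2 a1 a2)]
      refine integral_congr_ae (Filter.Eventually.of_forall fun ω => ?_)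
      by_cases h1 : A1v ω = a1 ∧ A2v ω = a2 <;> simp [h1]
    rw [hsplit]
    have hT1 : ∫ ω, (if A1v ω = a1 ∧ A2v ω = a2 then Y ω * w' (X ω) a1 a2 else 0) ∂Q
        = ∫ x, π1 x a1 * π2 x a1 a2 * q x a1 a2 ∂P := by
      rw [hlawY a1 a2 (fun x => w' x a1 a2) (hw'meas a1 a2) ⟨Cw, fun x => hw'bd x a1 a2⟩]
      refine integral_congr_ae ?_
      filter_upwards [hmuw a1 a2] with x hx
      calc μ1 x a1 * μ2 x a1 a2 * q x a1 a2 * w' x a1 a2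
          = μ1 x a1 * μ2 x a1 a2 * w' x a1 a2 * q x a1 a2 := by ring
        _ = π1 x a1 * π2 x a1 a2 * q x a1 a2 := by rw [hx]
    have hT2 : ∫ ω, (if A1v ω = a1 ∧ A2v ω = a2 then
          w' (X ω) a1 a2 * qhat (X ω) a1 a2 else 0) ∂Q
        = ∫ x, π1 x a1 * π2 x a1 a2 * qhat x a1 a2 ∂P := by
      rw [hlaw a1 a2 (fun x => w' x a1 a2 * qhat x a1 a2)
        ((hw'meas a1 a2).mul (hqhatmeas a1 a2))
        ⟨Cw * Cqhat, fun x => by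
          rw [abs_mul]
          exact mul_le_mul (hw'bd x a1 a2) (hqhatbd x a1 a2) (abs_nonneg _) hCw⟩]
      refine integral_congr_ae ?_
      filter_upwards [hmuw a1 a2] with x hx
      calc μ1 x a1 * μ2 x a1 a2 * (w' x a1 a2 * qhat x a1 a2)
          = μ1 x a1 * μ2 x a1 a2 * w' x a1 a2 * qhat x a1 a2 := by ring
        _ = π1 x a1 * π2 x a1 a2 * qhat x a1 a2 := by rw [hx]
    rw [hT1, hT2]
  -- sums of the P-side terms
  have hsumP : ∀ (g : 𝒳 → A1 → A2 → ℝ) (Cg : ℝ), (∀ x a1 a2, |g x a1 a2| ≤ Cg) →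
      (∀ a1 a2, Measurable fun x => g x a1 a2) →
      ∑ a1, ∑ a2, ∫ x, π1 x a1 * π2 x a1 a2 * g x a1 a2 ∂P
        = ∫ x, ∑ a1, π1 x a1 * ∑ a2, π2 x a1 a2 * g x a1 a2 ∂P := by
    intro g Cg hg hgm
    have hintpi : ∀ (a1 : A1) (a2 : A2), Integrable
        (fun x => π1 x a1 * π2 x a1 a2 * g x a1 a2) P := by
      intro a1 a2
      refine hIbd_aux P _ Cg ?_ (hπprodbd g Cg hg a1 a2)
      exact ((hπ1meas a1).mul (hπ2meas a1 a2)).mul (hgm a1 a2)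
    rw [sum_integral_swap P (fun a1 a2 x => π1 x a1 * π2 x a1 a2 * g x a1 a2) hintpi]
    refine integral_congr_ae (Filter.Eventually.of_forall fun x => ?_)
    show ∑ a1, ∑ a2, π1 x a1 * π2 x a1 a2 * g x a1 a2
      = ∑ a1, π1 x a1 * ∑ a2, π2 x a1 a2 * g x a1 a2
    refine Finset.sum_congr rfl fun a1 _ => ?_
    rw [Finset.mul_sum]
    exact Finset.sum_congr rfl fun a2 _ => by ring
  -- put everything together
  calc ∫ ω, (m (X ω) + w (X ω) (A1v ω) (A2v ω) *
        (Y ω - qhat (X ω) (A1v ω) (A2v ω))) ∂Q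
      = ∫ ω, (m (X ω) + ∑ a1, ∑ a2,
          (if A1v ω = a1 ∧ A2v ω = a2 then
            Y ω * w' (X ω) a1 a2 - w' (X ω) a1 a2 * qhat (X ω) a1 a2 else 0)) ∂Q :=
        integral_congr_ae hptw
    _ = (∫ ω, m (X ω) ∂Q) + ∑ a1, ∑ a2,
          ∫ ω, (if A1v ω = a1 ∧ A2v ω = a2 then
            Y ω * w' (X ω) a1 a2 - w' (X ω) a1 a2 * qhat (X ω) a1 a2 else 0) ∂Q := by
        rw [integral_add hintm
          (integrable_finset_sum _ fun a1 _ => integrable_finset_sum _ fun a2 _ => hintT a1 a2)]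
        congr 1
        exact (sum_integral_swap Q (fun a1 a2 ω => if A1v ω = a1 ∧ A2v ω = a2 then
          Y ω * w' (X ω) a1 a2 - w' (X ω) a1 a2 * qhat (X ω) a1 a2 else 0) hintT).symm
    _ = (∫ x, m x ∂P) + ((∫ x, V x ∂P) - ∫ x, m x ∂P) := by
        rw [hmQ]
        congr 1
        simp only [hterm]
        rw [Finset.sum_congr rfl fun a1 _ => Finset.sum_sub_distrib _ _, Finset.sum_sub_distrib]
        rw [hsumP q Cq hqbd hqmeas, hsumP qhat Cqhat hqhatbd hqhatmeas]
    _ = ∫ x, V x ∂P := by ring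
end

section
/- Let Π be a nonempty finite set, let V, B : Π → ℝ with B(π) ≥ 0 for all π, let M > 0, ν̂ ∈ (0, 1), n ≥ 1, α ∈ (0, 1), λ ≥ 0, and Δ_V, Δ_B ≥ 0. Suppose that on a common probability space, for each π ∈ Π there are independent real random variables ψ̂_{π,1}, …, ψ̂_{π,n}, each taking values in [−M ν̂⁻², M(1 + ν̂⁻²)], whose averaged means satisfy |(1/n) Σ_{i=1}^n E[ψ̂_{π,i}] − V(π)| ≤ Δ_V, and independent real random variables b̂_{π,1}, …, b̂_{π,n}, each taking values in [0, ν̂⁻²], whose averaged means satisfy |(1/n) Σ_{i=1}^n E[b̂_{π,i}] − B(π)| ≤ Δ_B. Set V̂(π) = (1/n) Σ_i ψ̂_{π,i}, B̂(π) = (1/n) Σ_i b̂_{π,i}, r_V = M(1 + 2ν̂⁻²) √( log(4|Π|/α) / (2n) ), and r_B = ν̂⁻² √( log(4|Π|/α) / (2n) ). Let π* maximize V over Π and let π̂ maximize V̂(π) − λ B̂(π) over Π. Then, with probability at least 1 − α, simultaneously: sup_{π∈Π} |V̂(π) − V(π)| ≤ r_V + Δ_V; sup_{π∈Π} |B̂(π)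 − B(π)| ≤ r_B + Δ_B; and V(π*) − V(π̂) ≤ λ B(π*) + 2(r_V + Δ_V) + 2λ(r_B + Δ_B). -/
open MeasureTheory ProbabilityTheory
open Real

lemma hoeff_scalar {p : ℝ} (hp0 : 0 ≤ p) (hp1 : p ≤ 1) (h : ℝ) :
    (1 - p) * exp (-(p * h)) + p * exp ((1 - p) * h) ≤ exp (h ^ 2 / 8) := by
  have hD : ∀ x : ℝ, 0 < 1 - p + p * exp x := by
    intro x
    rcases eq_or_lt_of_le hp1 with rfl | hlt
    · simpa using exp_pos x
    · have := mul_nonneg hp0 (exp_pos x).le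
      linarith
  set F : ℝ → ℝ := fun x => x ^ 2 / 8 + p * x - Real.log (1 - p + p * exp x) with hF
  set G : ℝ → ℝ := fun x => x / 4 + p - p * exp x / (1 - p + p * exp x) with hG
  have hDd : ∀ x : ℝ, HasDerivAt (fun x => 1 - p + p * exp x) (p * exp x) x := by
    intro x
    exact ((Real.hasDerivAt_exp x).const_mul p).const_add (1 - p)
  have hFd : ∀ x : ℝ, HasDerivAt F (G x) x := by
    intro x
    have h1 : HasDerivAt (fun x : ℝ => x ^ 2 / 8) (x / 4) x := by
      have := (hasDerivAt_pow 2 x).div_const 8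
      refine this.congr_deriv ?_
      push_cast
      ring
    have h2 : HasDerivAt (fun x : ℝ => p * x) p x := by
      simpa using (hasDerivAt_id x).const_mul p
    have h3 : HasDerivAt (fun x => Real.log (1 - p + p * exp x))
        (p * exp x / (1 - p + p * exp x)) x := (hDd x).log (hD x).ne'
    exact (h1.add h2).sub h3
  have hGd : ∀ x : ℝ, HasDerivAt G
      (1/4 - (p * exp x * (1 - p + p * exp x) - p * exp x * (p * exp x)) /
        (1 - p + p * exp x) ^ 2) x := by
    intro x
    have h1 : HasDerivAt (fun x : ℝ => x / 4 + p) (1/4) x := by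
      simpa using ((hasDerivAt_id x).div_const 4).add_const p
    have h2 : HasDerivAt (fun x => p * exp x / (1 - p + p * exp x))
        ((p * exp x * (1 - p + p * exp x) - p * exp x * (p * exp x)) /
          (1 - p + p * exp x) ^ 2) x :=
      ((Real.hasDerivAt_exp x).const_mul p).div (hDd x) (hD x).ne'
    exact h1.sub h2
  have hG0 : G 0 = 0 := by
    simp only [hG, exp_zero, mul_one]
    have : 1 - p + p = 1 := by ring
    rw [this]
    norm_num
  have hGmono : Monotone G := by
    refine monotone_of_deriv_nonneg (fun x => (hGd x).differentiableAt) fun x => ?_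
    rw [(hGd x).deriv]
    have hx := hD x
    have he := exp_pos x
    rw [sub_nonneg, div_le_iff₀ (by positivity)]
    nlinarith [sq_nonneg ((1 - p) - p * exp x)]
  have hF0 : F 0 = 0 := by
    simp only [hF, exp_zero, mul_one, mul_zero]
    have : 1 - p + p = 1 := by ring
    rw [this]
    simp
  have hFnn : ∀ x : ℝ, 0 ≤ F x := by
    intro x
    rcases le_total 0 x with hx | hx
    · have hmono : MonotoneOn F (Set.Ici (0:ℝ)) := by
        refine monotoneOn_of_deriv_nonneg (convex_Ici 0)
          (fun y _ => (hFd y).continuousAt.continuousWithinAt)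
          (fun y _ => (hFd y).differentiableAt.differentiableWithinAt) fun y hy => ?_
        rw [(hFd y).deriv]
        have : (0:ℝ) ≤ y := le_of_lt (by simpa using hy)
        calc (0:ℝ) = G 0 := hG0.symm
          _ ≤ G y := hGmono this
      have := hmono (Set.self_mem_Ici) hx hx
      rwa [hF0] at this
    · have hmono : AntitoneOn F (Set.Iic (0:ℝ)) := by
        refine antitoneOn_of_deriv_nonpos (convex_Iic 0)
          (fun y _ => (hFd y).continuousAt.continuousWithinAt)
          (fun y _ => (hFd y).differentiableAt.differentiableWithinAt) fun y hy => ?_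
        rw [(hFd y).deriv]
        have hy0 : y ≤ 0 := le_of_lt (by simpa using hy)
        calc G y ≤ G 0 := hGmono hy0
          _ = 0 := hG0
      have := hmono hx (Set.self_mem_Iic) hx
      rwa [hF0] at this
  -- conclude
  have hFh := hFnn h
  have hlog : Real.log (1 - p + p * exp h) ≤ h ^ 2 / 8 + p * h := by
    simp only [hF] at hFh; linarith
  have hDle : 1 - p + p * exp h ≤ exp (h ^ 2 / 8 + p * h) := by
    rw [← Real.exp_log (hD h)]
    exact exp_le_exp.2 hlog
  have key : exp (-(p * h)) * (1 - p + p * exp h) ≤ exp (h ^ 2 / 8) := by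
    calc exp (-(p * h)) * (1 - p + p * exp h)
        ≤ exp (-(p * h)) * exp (h ^ 2 / 8 + p * h) := by
          exact mul_le_mul_of_nonneg_left hDle (exp_pos _).le
      _ = exp (h ^ 2 / 8) := by rw [← exp_add]; ring_nf
  calc (1 - p) * exp (-(p * h)) + p * exp ((1 - p) * h)
      = exp (-(p * h)) * (1 - p + p * exp h) := by
        rw [show (1 - p) * h = -(p * h) + h by ring, exp_add]; ring
    _ ≤ exp (h ^ 2 / 8) := key


lemma integrable_of_bdd {Ω : Type*} [MeasurableSpace Ω] {μ : Measure Ω} [IsProbabilityMeasure μ]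
    {f : Ω → ℝ} (hf : Measurable f) {C : ℝ} (h : ∀ ω, |f ω| ≤ C) : Integrable f μ := by
  refine Integrable.mono' (integrable_const C) hf.aestronglyMeasurable (ae_of_all _ fun ω => ?_)
  simpa [Real.norm_eq_abs] using h ω

lemma integrable_range {Ω : Type*} [MeasurableSpace Ω] {μ : Measure Ω} [IsProbabilityMeasure μ]
    {f : Ω → ℝ} (hf : Measurable f) {a b : ℝ} (h : ∀ ω, a ≤ f ω ∧ f ω ≤ b) :
    Integrable f μ := by
  refine integrable_of_bdd hf (C := max |a| |b|) fun ω => abs_le.2 ⟨?_, ?_⟩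
  · calc -max |a| |b| ≤ -|a| := by simp
      _ ≤ a := neg_abs_le a
      _ ≤ f ω := (h ω).1
  · calc f ω ≤ b := (h ω).2
      _ ≤ |b| := le_abs_self b
      _ ≤ max |a| |b| := le_max_right _ _

lemma integrable_exp_range {Ω : Type*} [MeasurableSpace Ω] {μ : Measure Ω} [IsProbabilityMeasure μ]
    {f : Ω → ℝ} (hf : Measurable f) {a b : ℝ} (h : ∀ ω, a ≤ f ω ∧ f ω ≤ b) (t : ℝ) :
    Integrable (fun ω => exp (t * f ω)) μ := by
  refine integrable_of_bdd (by fun_prop) (C := exp (|t| * max |a| |b|)) fun ω => ?_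
  rw [abs_of_pos (exp_pos _)]
  apply exp_le_exp.2
  calc t * f ω ≤ |t * f ω| := le_abs_self _
    _ = |t| * |f ω| := abs_mul _ _
    _ ≤ |t| * max |a| |b| := by
        apply mul_le_mul_of_nonneg_left _ (abs_nonneg t)
        refine abs_le.2 ⟨?_, ?_⟩
        · calc -max |a| |b| ≤ -|a| := by simp
            _ ≤ a := neg_abs_le a
            _ ≤ f ω := (h ω).1
        · calc f ω ≤ b := (h ω).2
            _ ≤ |b| := le_abs_self b
            _ ≤ max |a| |b| := le_max_right _ _

/-- **Hoeffding's lemma** -/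
lemma hoeff_mgf {Ω : Type*} [MeasurableSpace Ω] {μ : Measure Ω} [IsProbabilityMeasure μ]
    {X : Ω → ℝ} (hX : Measurable X) {a b : ℝ} (hab : ∀ ω, a ≤ X ω ∧ X ω ≤ b)
    (hmean : ∫ ω, X ω ∂μ = 0) (t : ℝ) :
    mgf X μ t ≤ exp (t ^ 2 * (b - a) ^ 2 / 8) := by
  have hXint : Integrable X μ := integrable_range hX hab
  have ha0 : a ≤ 0 := by
    have : ∫ _ : Ω, a ∂μ ≤ ∫ ω, X ω ∂μ :=
      integral_mono (integrable_const a) hXint fun ω => (hab ω).1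
    simpa [hmean] using this
  have hb0 : 0 ≤ b := by
    have : ∫ ω, X ω ∂μ ≤ ∫ _ : Ω, b ∂μ :=
      integral_mono hXint (integrable_const b) fun ω => (hab ω).2
    simpa [hmean] using this
  rcases eq_or_lt_of_le (ha0.trans hb0) with hab' | hab'
  · -- a = b = 0, X ≡ 0
    have ha : a = 0 := le_antisymm ha0 (hab' ▸ hb0)
    have hb : b = 0 := hab' ▸ ha
    have hX0 : ∀ ω, X ω = 0 := fun ω =>
      le_antisymm (hb ▸ (hab ω).2) (ha ▸ (hab ω).1)
    have : mgf X μ t = 1 := by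
      simp only [mgf]
      have : (fun ω => rexp (t * X ω)) = fun _ => (1:ℝ) := by
        funext ω; rw [hX0 ω]; simp
      rw [this]; simp
    rw [this, ha, hb]
    simp
  · set L := b - a with hL
    have hLpos : 0 < L := sub_pos.2 hab'
    set p := -a / L with hp
    have hp0 : 0 ≤ p := div_nonneg (neg_nonneg.2 ha0) hLpos.le
    have hp1 : p ≤ 1 := by
      rw [hp, div_le_one hLpos]; linarith
    -- pointwise convexity bound
    have hpt : ∀ ω, exp (t * X ω) ≤
        exp (t * a) / L * (b - X ω) + exp (t * b) / L * (X ω - a) := by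
      intro ω
      set s := (X ω - a) / L with hs
      have hs0 : 0 ≤ s := div_nonneg (by linarith [(hab ω).1]) hLpos.le
      have hs1 : s ≤ 1 := by rw [hs, div_le_one hLpos]; linarith [(hab ω).2]
      have hcx := convexOn_exp.2 (Set.mem_univ (t * a)) (Set.mem_univ (t * b))
        (by linarith : (0:ℝ) ≤ 1 - s) hs0 (by ring)
      have harg : (1 - s) • (t * a) + s • (t * b) = t * X ω := by
        simp only [smul_eq_mul, hs]
        field_simp
        ring
      rw [harg] at hcx
      calc exp (t * X ω) ≤ (1 - s) • exp (t * a) + s • exp (t * b) := hcx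
        _ = exp (t * a) / L * (b - X ω) + exp (t * b) / L * (X ω - a) := by
            simp only [smul_eq_mul, hs]
            field_simp
            ring
    -- integrate
    have hint1 : Integrable (fun ω => exp (t * a) / L * (b - X ω)) μ :=
      (((integrable_const b).sub hXint)).const_mul _
    have hint2 : Integrable (fun ω => exp (t * b) / L * (X ω - a)) μ :=
      ((hXint.sub (integrable_const a))).const_mul _
    have hmgf : mgf X μ t ≤ exp (t * a) / L * b + exp (t * b) / L * (-a) := by
      have := integral_mono (integrable_exp_range hX hab t) (hint1.add hint2) hpt
      simp only [Pi.add_apply] at this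
      rw [integral_add hint1 hint2, integral_const_mul, integral_const_mul,
        integral_sub (integrable_const b) hXint, integral_sub hXint (integrable_const a),
        hmean, integral_const, integral_const] at this
      simpa [mgf] using this
    -- apply scalar lemma with h := t * L
    have hsc := hoeff_scalar hp0 hp1 (t * L)
    have e1 : -(p * (t * L)) = t * a := by
      rw [hp]; field_simp
    have e2 : (1 - p) * (t * L) = t * b := by
      rw [hp]; field_simp; ring
    have e3 : (1 - p) = b / L := by
      rw [hp]; field_simp; ring
    have e4 : (t * L) ^ 2 / 8 = t ^ 2 * (b - a) ^ 2 / 8 := by rw [hL]; ring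
    rw [e1, e2, e3, e4] at hsc
    calc mgf X μ t ≤ exp (t * a) / L * b + exp (t * b) / L * (-a) := hmgf
      _ = b / L * exp (t * a) + p * exp (t * b) := by rw [hp]; ring
      _ ≤ exp (t ^ 2 * (b - a) ^ 2 / 8) := hsc


/-- One-sided Hoeffding tail bound for sums of independent bounded rvs. -/
lemma hoeff_tail {Ω : Type*} [MeasurableSpace Ω] (μ : Measure Ω) [IsProbabilityMeasure μ]
    {n : ℕ} (hn : 1 ≤ n) {X : Fin n → Ω → ℝ} (hmeas : ∀ i, Measurable (X i))
    (hind : iIndepFun X μ) {a b : ℝ} (hab : a < b)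
    (hrange : ∀ i ω, a ≤ X i ω ∧ X i ω ≤ b) {ε : ℝ} (hε : 0 ≤ ε) :
    (μ {ω | ε ≤ ∑ i, (X i ω - ∫ ω', X i ω' ∂μ)}).toReal ≤
      exp (-2 * ε ^ 2 / (n * (b - a) ^ 2)) := by
  set m : Fin n → ℝ := fun i => ∫ ω', X i ω' ∂μ with hm
  set Y : Fin n → Ω → ℝ := fun i ω => X i ω - m i with hY
  have hYmeas : ∀ i, Measurable (Y i) := fun i => (hmeas i).sub_const (m i)
  have hYind : iIndepFun Y μ := by
    have := hind.comp (g := fun i (x : ℝ) => x - m i)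
      (fun i => measurable_id.sub_const (m i))
    exact this
  have hYrange : ∀ i ω, a - m i ≤ Y i ω ∧ Y i ω ≤ b - m i := fun i ω =>
    ⟨by simp only [hY]; linarith [(hrange i ω).1], by simp only [hY]; linarith [(hrange i ω).2]⟩
  have hYmean : ∀ i, ∫ ω, Y i ω ∂μ = 0 := by
    intro i
    simp only [hY]
    rw [integral_sub (integrable_range (hmeas i) (hrange i)) (integrable_const _),
      integral_const]
    simp [hm]
  set L : ℝ := b - a with hLdef
  have hLpos : 0 < L := sub_pos.2 hab
  have hnpos : (0:ℝ) < n := by exact_mod_cast Nat.lt_of_lt_of_le Nat.zero_lt_one hn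
  set s : ℝ := 4 * ε / (n * L ^ 2) with hs
  have hs0 : 0 ≤ s := by positivity
  have hintY : ∀ i, Integrable (fun ω => exp (s * Y i ω)) μ := fun i =>
    integrable_exp_range (hYmeas i) (hYrange i) s
  have hintS : Integrable (fun ω => exp (s * (∑ i, Y i) ω)) μ :=
    hYind.integrable_exp_mul_sum hYmeas (fun i _ => hintY i)
  have hmgfS : mgf (∑ i, Y i) μ s ≤ exp (n * (s ^ 2 * L ^ 2 / 8)) := by
    rw [hYind.mgf_sum hYmeas]
    calc ∏ i, mgf (Y i) μ s
        ≤ ∏ _i : Fin n, exp (s ^ 2 * L ^ 2 / 8) := by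
          refine Finset.prod_le_prod (fun i _ => mgf_nonneg) fun i _ => ?_
          have := hoeff_mgf (hYmeas i) (hYrange i) (hYmean i) s
          have hbm : (b - m i - (a - m i)) = L := by rw [hLdef]; ring
          rwa [hbm] at this
      _ = exp (n * (s ^ 2 * L ^ 2 / 8)) := by
          rw [Finset.prod_const, ← Real.exp_nat_mul]
          simp
  have hch := measure_ge_le_exp_mul_mgf (X := ∑ i, Y i) (μ := μ) ε hs0 hintS
  have hsum : {ω | ε ≤ ∑ i, (X i ω - m i)} = {ω | ε ≤ (∑ i, Y i) ω} := by
    ext ω; simp [hY]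
  rw [hsum]
  calc (μ {ω | ε ≤ (∑ i, Y i) ω}).toReal
      ≤ exp (-s * ε) * mgf (∑ i, Y i) μ s := hch
    _ ≤ exp (-s * ε) * exp (n * (s ^ 2 * L ^ 2 / 8)) :=
        mul_le_mul_of_nonneg_left hmgfS (exp_pos _).le
    _ = exp (-s * ε + n * (s ^ 2 * L ^ 2 / 8)) := (exp_add _ _).symm
    _ = exp (-2 * ε ^ 2 / (n * L ^ 2)) := by
        congr 1
        rw [hs]
        field_simp
        ring


/-- Two-sided deviation bound for the empirical average. -/
lemma hoeff_dev {Ω : Type*} [MeasurableSpace Ω] (μ : Measure Ω) [IsProbabilityMeasure μ]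
    {n : ℕ} (hn : 1 ≤ n) {X : Fin n → Ω → ℝ} (hmeas : ∀ i, Measurable (X i))
    (hind : iIndepFun X μ) {a b : ℝ} (hab : a < b)
    (hrange : ∀ i ω, a ≤ X i ω ∧ X i ω ≤ b) {r : ℝ} (hr : 0 ≤ r) :
    μ {ω | r < |(n:ℝ)⁻¹ * (∑ i, X i ω) - (n:ℝ)⁻¹ * (∑ i, ∫ ω', X i ω' ∂μ)|} ≤
      ENNReal.ofReal (2 * exp (-2 * n * r ^ 2 / (b - a) ^ 2)) := by
  have hnpos : (0:ℝ) < n := by exact_mod_cast Nat.lt_of_lt_of_le Nat.zero_lt_one hn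
  set m : Fin n → ℝ := fun i => ∫ ω', X i ω' ∂μ with hm
  have hεnn : (0:ℝ) ≤ n * r := by positivity
  -- upper tail
  have hup := hoeff_tail μ hn hmeas hind hab hrange (ε := n * r) hεnn
  -- lower tail : apply to -X
  have hnegmeas : ∀ i, Measurable (fun ω => -X i ω) := fun i => (hmeas i).neg
  have hnegind : iIndepFun (fun i ω => -X i ω) μ := by
    have := hind.comp (g := fun _ (x : ℝ) => -x) (fun _ => measurable_neg)
    exact this
  have hnegrange : ∀ i ω, -b ≤ -X i ω ∧ -X i ω ≤ -a := fun i ω =>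
    ⟨by linarith [(hrange i ω).2], by linarith [(hrange i ω).1]⟩
  have hlo := hoeff_tail μ hn hnegmeas hnegind (a := -b) (b := -a)
    (by linarith) hnegrange (ε := n * r) hεnn
  have hmint : ∀ i, ∫ ω', -X i ω' ∂μ = -(m i) := fun i => integral_neg _
  -- exponent values agree
  have hexp : -2 * ((n:ℝ) * r) ^ 2 / (n * (b - a) ^ 2) = -2 * n * r ^ 2 / (b - a) ^ 2 := by
    have hL : b - a ≠ 0 := ne_of_gt (sub_pos.2 hab)
    field_simp
  have hexp2 : (-a - -b) = b - a := by ring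
  rw [hexp] at hup
  rw [hexp2, hexp] at hlo
  -- inclusion
  set A := {ω | (n:ℝ) * r ≤ ∑ i, (X i ω - m i)} with hA
  set B := {ω | (n:ℝ) * r ≤ ∑ i, (-X i ω - ∫ ω', -X i ω' ∂μ)} with hB
  have hsub : {ω | r < |(n:ℝ)⁻¹ * (∑ i, X i ω) - (n:ℝ)⁻¹ * (∑ i, m i)|} ⊆ A ∪ B := by
    intro ω hω
    simp only [Set.mem_setOf_eq] at hω
    have hD : (n:ℝ)⁻¹ * (∑ i, X i ω) - (n:ℝ)⁻¹ * (∑ i, m i) =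
        (n:ℝ)⁻¹ * ∑ i, (X i ω - m i) := by
      rw [Finset.sum_sub_distrib]; ring
    set D := ∑ i, (X i ω - m i) with hDdef
    rw [hD] at hω
    have habs : (n:ℝ) * r < |D| := by
      have := hω
      rw [abs_mul, abs_inv, abs_of_pos hnpos] at this
      calc (n:ℝ) * r < (n:ℝ) * ((n:ℝ)⁻¹ * |D|) := by
            exact mul_lt_mul_of_pos_left this hnpos
        _ = |D| := by field_simp
    rcases le_or_gt 0 D with hD0 | hD0
    · left
      simp only [hA, Set.mem_setOf_eq]
      rw [abs_of_nonneg hD0] at habs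
      linarith
    · right
      simp only [hB, Set.mem_setOf_eq]
      have : ∑ i, (-X i ω - ∫ ω', -X i ω' ∂μ) = -D := by
        rw [hDdef, ← Finset.sum_neg_distrib]
        refine Finset.sum_congr rfl fun i _ => ?_
        rw [hmint i]; ring
      rw [this]
      rw [abs_of_neg hD0] at habs
      linarith
  calc μ {ω | r < |(n:ℝ)⁻¹ * (∑ i, X i ω) - (n:ℝ)⁻¹ * (∑ i, m i)|}
      ≤ μ (A ∪ B) := measure_mono hsub
    _ ≤ μ A + μ B := measure_union_le A B
    _ ≤ ENNReal.ofReal (exp (-2 * n * r ^ 2 / (b - a) ^ 2)) +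
        ENNReal.ofReal (exp (-2 * n * r ^ 2 / (b - a) ^ 2)) := by
        gcongr
        · rw [← ENNReal.ofReal_toReal (measure_ne_top μ A)]
          exact ENNReal.ofReal_le_ofReal hup
        · rw [← ENNReal.ofReal_toReal (measure_ne_top μ B)]
          exact ENNReal.ofReal_le_ofReal hlo
    _ = ENNReal.ofReal (2 * exp (-2 * n * r ^ 2 / (b - a) ^ 2)) := by
        rw [← ENNReal.ofReal_add (exp_pos _).le (exp_pos _).le]
        congr 1
        ring


/-- **Finite-class CASP guarantee with reconstructed propensities.**
For each policy `p` in a finite nonempty library, the reconstructed-propensity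
doubly robust scores `ψ p i` are independent with values in
`[-M ν̂⁻², M (1 + ν̂⁻²)]` and averaged means within `Δ_V` of `V p`, and the
reconstructed conditional burdens `b p i` are independent with values in
`[0, ν̂⁻²]` and averaged means within `Δ_B` of `B p ≥ 0`. With
`r_V = M (1 + 2 ν̂⁻²) √(log(4 |Π| / α)/(2n))` and
`r_B = ν̂⁻² √(log(4 |Π| / α)/(2n))`, if `pstar` maximizes `V` and the (random)
pessimistic selector `phat` maximizes `V̂(p) - λ B̂(p)` pointwise, then with
probability at least `1 - α` simultaneously:
`sup_p |V̂(p) - V(p)| ≤ r_V + Δ_V`, `sup_p |B̂(p) - B(p)| ≤ r_B + Δ_B`, and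
`V(pstar) - V(phat) ≤ λ B(pstar) + 2 (r_V + Δ_V) + 2 λ (r_B + Δ_B)`. -/
theorem stmt13 {Pol : Type*} [Fintype Pol] [Nonempty Pol]
    (V B : Pol → ℝ) (hB : ∀ p, 0 ≤ B p)
    (M νhat : ℝ) (hM : 0 < M) (hν0 : 0 < νhat) (hν1 : νhat < 1)
    (n : ℕ) (hn : 1 ≤ n) (α : ℝ) (hα0 : 0 < α) (hα1 : α < 1)
    (lam : ℝ) (hlam : 0 ≤ lam)
    (ΔV ΔB : ℝ) (hΔV : 0 ≤ ΔV) (hΔB : 0 ≤ ΔB)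
    {Ω : Type*} [MeasurableSpace Ω] (Q : Measure Ω) [IsProbabilityMeasure Q]
    (ψ : Pol → Fin n → Ω → ℝ) (b : Pol → Fin n → Ω → ℝ)
    (hψmeas : ∀ p i, Measurable (ψ p i))
    (hbmeas : ∀ p i, Measurable (b p i))
    (hψindep : ∀ p, iIndepFun (ψ p) Q)
    (hbindep : ∀ p, iIndepFun (b p) Q)
    (hψrange : ∀ p i ω,
      -(M * (νhat ^ 2)⁻¹) ≤ ψ p i ω ∧ ψ p i ω ≤ M * (1 + (νhat ^ 2)⁻¹))
    (hbrange : ∀ p i ω, 0 ≤ b p i ω ∧ b p i ω ≤ (νhat ^ 2)⁻¹)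
    (hψmean : ∀ p, |(n : ℝ)⁻¹ * (∑ i, ∫ ω, ψ p i ω ∂Q) - V p| ≤ ΔV)
    (hbmean : ∀ p, |(n : ℝ)⁻¹ * (∑ i, ∫ ω, b p i ω ∂Q) - B p| ≤ ΔB)
    (pstar : Pol) (hstar : ∀ p, V p ≤ V pstar)
    (phat : Ω → Pol)
    (hphat : ∀ ω p,
      (n : ℝ)⁻¹ * (∑ i, ψ p i ω) - lam * ((n : ℝ)⁻¹ * (∑ i, b p i ω)) ≤
      (n : ℝ)⁻¹ * (∑ i, ψ (phat ω) i ω) -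
        lam * ((n : ℝ)⁻¹ * (∑ i, b (phat ω) i ω))) :
    (1 - α : ℝ) ≤
      (Q {ω |
        (∀ p, |(n : ℝ)⁻¹ * (∑ i, ψ p i ω) - V p| ≤
          M * (1 + 2 * (νhat ^ 2)⁻¹) *
            Real.sqrt (Real.log (4 * (Fintype.card Pol) / α) / (2 * n)) + ΔV) ∧
        (∀ p, |(n : ℝ)⁻¹ * (∑ i, b p i ω) - B p| ≤
          (νhat ^ 2)⁻¹ *
            Real.sqrt (Real.log (4 * (Fintype.card Pol) / α) / (2 * n)) + ΔB) ∧
        V pstar - V (phat ω) ≤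
          lam * B pstar +
          2 * (M * (1 + 2 * (νhat ^ 2)⁻¹) *
            Real.sqrt (Real.log (4 * (Fintype.card Pol) / α) / (2 * n)) + ΔV) +
          2 * lam * ((νhat ^ 2)⁻¹ *
            Real.sqrt (Real.log (4 * (Fintype.card Pol) / α) / (2 * n)) + ΔB)}).toReal := by
  classical
  set K : ℕ := Fintype.card Pol with hK
  have hKpos : 0 < K := Fintype.card_pos
  have hKR : (0:ℝ) < K := by exact_mod_cast hKpos
  have hnR : (0:ℝ) < n := by exact_mod_cast Nat.lt_of_lt_of_le Nat.zero_lt_one hn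
  have hν2 : (0:ℝ) < (νhat ^ 2)⁻¹ := by positivity
  set q : ℝ := Real.log (4 * (K:ℝ) / α) / (2 * n) with hq
  have hCpos : (0:ℝ) < 4 * K / α := by positivity
  have hC1 : (1:ℝ) ≤ 4 * K / α := by
    rw [le_div_iff₀ hα0]
    have : (1:ℝ) ≤ (K:ℝ) := by exact_mod_cast hKpos
    nlinarith
  have hq0 : 0 ≤ q := div_nonneg (Real.log_nonneg hC1) (by positivity)
  have hsq : Real.sqrt q ^ 2 = q := Real.sq_sqrt hq0
  set rV : ℝ := M * (1 + 2 * (νhat ^ 2)⁻¹) * Real.sqrt q with hrV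
  set rB : ℝ := (νhat ^ 2)⁻¹ * Real.sqrt q with hrB
  have hLV : (0:ℝ) < M * (1 + 2 * (νhat ^ 2)⁻¹) := by positivity
  have hrV0 : 0 ≤ rV := by positivity
  have hrB0 : 0 ≤ rB := by positivity
  -- per-policy deviation bounds
  have hval : ∀ L : ℝ, 0 < L →
      2 * exp (-2 * n * (L * Real.sqrt q) ^ 2 / L ^ 2) = α / (2 * K) := by
    intro L hL
    have h1 : -2 * (n:ℝ) * (L * Real.sqrt q) ^ 2 / L ^ 2 = -Real.log (4 * K / α) := by
      rw [mul_pow, hsq, hq]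
      field_simp
    rw [h1, Real.exp_neg, Real.exp_log hCpos]
    rw [inv_div]
    field_simp
    ring
  have hdevV : ∀ p, Q {ω | rV < |(n:ℝ)⁻¹ * (∑ i, ψ p i ω) -
      (n:ℝ)⁻¹ * (∑ i, ∫ ω, ψ p i ω ∂Q)|} ≤ ENNReal.ofReal (α / (2 * K)) := by
    intro p
    have hab : -(M * (νhat ^ 2)⁻¹) < M * (1 + (νhat ^ 2)⁻¹) := by nlinarith
    have hdev := hoeff_dev Q hn (hψmeas p) (hψindep p) hab (hψrange p) hrV0
    have hba : M * (1 + (νhat ^ 2)⁻¹) - -(M * (νhat ^ 2)⁻¹) =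
        M * (1 + 2 * (νhat ^ 2)⁻¹) := by ring
    rw [hba] at hdev
    have := hval (M * (1 + 2 * (νhat ^ 2)⁻¹)) hLV
    rw [hrV] at hdev ⊢
    rw [this] at hdev
    exact hdev
  have hdevB : ∀ p, Q {ω | rB < |(n:ℝ)⁻¹ * (∑ i, b p i ω) -
      (n:ℝ)⁻¹ * (∑ i, ∫ ω, b p i ω ∂Q)|} ≤ ENNReal.ofReal (α / (2 * K)) := by
    intro p
    have hab : (0:ℝ) < (νhat ^ 2)⁻¹ := hν2
    have hdev := hoeff_dev Q hn (hbmeas p) (hbindep p) hab (hbrange p) hrB0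
    have hba : (νhat ^ 2)⁻¹ - 0 = (νhat ^ 2)⁻¹ := by ring
    rw [hba] at hdev
    have := hval ((νhat ^ 2)⁻¹) hν2
    rw [hrB] at hdev ⊢
    rw [this] at hdev
    exact hdev
  -- bad events
  set EV : Pol → Set Ω := fun p => {ω | rV < |(n:ℝ)⁻¹ * (∑ i, ψ p i ω) -
      (n:ℝ)⁻¹ * (∑ i, ∫ ω, ψ p i ω ∂Q)|} with hEV
  set EB : Pol → Set Ω := fun p => {ω | rB < |(n:ℝ)⁻¹ * (∑ i, b p i ω) -
      (n:ℝ)⁻¹ * (∑ i, ∫ ω, b p i ω ∂Q)|} with hEB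
  set U : Set Ω := ⋃ p, EV p ∪ EB p with hU
  have hEVmeas : ∀ p, MeasurableSet (EV p) := by
    intro p
    have h1 : Measurable fun ω => ∑ i, ψ p i ω :=
      Finset.measurable_sum _ fun i _ => hψmeas p i
    exact measurableSet_lt measurable_const
      (((h1.const_mul _).sub_const _).abs)
  have hEBmeas : ∀ p, MeasurableSet (EB p) := by
    intro p
    have h1 : Measurable fun ω => ∑ i, b p i ω :=
      Finset.measurable_sum _ fun i _ => hbmeas p i
    exact measurableSet_lt measurable_const
      (((h1.const_mul _).sub_const _).abs)
  have hUmeas : MeasurableSet U :=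
    MeasurableSet.iUnion fun p => (hEVmeas p).union (hEBmeas p)
  have hUbound : Q U ≤ ENNReal.ofReal α := by
    calc Q U ≤ ∑ p, Q (EV p ∪ EB p) := measure_iUnion_fintype_le Q _
      _ ≤ ∑ _p : Pol, ENNReal.ofReal (α / K) := by
          refine Finset.sum_le_sum fun p _ => ?_
          calc Q (EV p ∪ EB p) ≤ Q (EV p) + Q (EB p) := measure_union_le _ _
            _ ≤ ENNReal.ofReal (α / (2 * K)) + ENNReal.ofReal (α / (2 * K)) := by
                gcongr
                exacts [hdevV p, hdevB p]
            _ = ENNReal.ofReal (α / K) := by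
                rw [← ENNReal.ofReal_add (by positivity) (by positivity)]
                congr 1
                field_simp
                ring
      _ = ENNReal.ofReal α := by
          rw [Finset.sum_const, Finset.card_univ, ← hK, nsmul_eq_mul,
            ← ENNReal.ofReal_natCast K, ← ENNReal.ofReal_mul (by positivity)]
          congr 1
          field_simp
  -- good event is contained in the target set
  have hsubset : Uᶜ ⊆ {ω |
        (∀ p, |(n : ℝ)⁻¹ * (∑ i, ψ p i ω) - V p| ≤ rV + ΔV) ∧
        (∀ p, |(n : ℝ)⁻¹ * (∑ i, b p i ω) - B p| ≤ rB + ΔB) ∧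
        V pstar - V (phat ω) ≤
          lam * B pstar + 2 * (rV + ΔV) + 2 * lam * (rB + ΔB)} := by
    intro ω hω
    simp only [hU, Set.compl_iUnion, Set.mem_iInter, Set.mem_compl_iff, Set.mem_union,
      not_or] at hω
    have hgoodV : ∀ p, |(n:ℝ)⁻¹ * (∑ i, ψ p i ω) -
        (n:ℝ)⁻¹ * (∑ i, ∫ ω, ψ p i ω ∂Q)| ≤ rV := by
      intro p
      have := (hω p).1
      simp only [hEV, Set.mem_setOf_eq, not_lt] at this
      exact this
    have hgoodB : ∀ p, |(n:ℝ)⁻¹ * (∑ i, b p i ω) -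
        (n:ℝ)⁻¹ * (∑ i, ∫ ω, b p i ω ∂Q)| ≤ rB := by
      intro p
      have := (hω p).2
      simp only [hEB, Set.mem_setOf_eq, not_lt] at this
      exact this
    have c1 : ∀ p, |(n : ℝ)⁻¹ * (∑ i, ψ p i ω) - V p| ≤ rV + ΔV := by
      intro p
      calc |(n : ℝ)⁻¹ * (∑ i, ψ p i ω) - V p|
          ≤ |(n:ℝ)⁻¹ * (∑ i, ψ p i ω) - (n:ℝ)⁻¹ * (∑ i, ∫ ω, ψ p i ω ∂Q)| +
            |(n:ℝ)⁻¹ * (∑ i, ∫ ω, ψ p i ω ∂Q) - V p| := abs_sub_le _ _ _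
        _ ≤ rV + ΔV := add_le_add (hgoodV p) (hψmean p)
    have c2 : ∀ p, |(n : ℝ)⁻¹ * (∑ i, b p i ω) - B p| ≤ rB + ΔB := by
      intro p
      calc |(n : ℝ)⁻¹ * (∑ i, b p i ω) - B p|
          ≤ |(n:ℝ)⁻¹ * (∑ i, b p i ω) - (n:ℝ)⁻¹ * (∑ i, ∫ ω, b p i ω ∂Q)| +
            |(n:ℝ)⁻¹ * (∑ i, ∫ ω, b p i ω ∂Q) - B p| := abs_sub_le _ _ _
        _ ≤ rB + ΔB := add_le_add (hgoodB p) (hbmean p)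
    refine ⟨c1, c2, ?_⟩
    -- regret bound
    set ph := phat ω with hph
    have hVps := abs_le.1 (c1 pstar)
    have hVph := abs_le.1 (c1 ph)
    have hBps := abs_le.1 (c2 pstar)
    have hBhat0 : 0 ≤ (n : ℝ)⁻¹ * (∑ i, b ph i ω) := by
      apply mul_nonneg (by positivity)
      exact Finset.sum_nonneg fun i _ => (hbrange ph i ω).1
    have hsel := hphat ω pstar
    rw [← hph] at hsel
    have h1 : lam * ((n : ℝ)⁻¹ * (∑ i, b ph i ω)) ≥ 0 := mul_nonneg hlam hBhat0
    have h2 : lam * ((n : ℝ)⁻¹ * (∑ i, b pstar i ω)) ≤ lam * (B pstar + (rB + ΔB)) := by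
      apply mul_le_mul_of_nonneg_left _ hlam
      linarith [hBps.2]
    have h3 : 0 ≤ lam * (rB + ΔB) := mul_nonneg hlam (add_nonneg hrB0 hΔB)
    have hexp : lam * (B pstar + (rB + ΔB)) = lam * B pstar + lam * (rB + ΔB) := by ring
    rw [hexp] at h2
    linarith [hVps.1, hVph.2, hsel, h1, h2, h3]
  -- conclude
  have hQc : Q Uᶜ = 1 - Q U := prob_compl_eq_one_sub hUmeas
  have hQU1 : Q U ≤ 1 := prob_le_one
  have hUc : (Q Uᶜ).toReal = 1 - (Q U).toReal := by
    rw [hQc, ENNReal.toReal_sub_of_le hQU1 ENNReal.one_ne_top, ENNReal.toReal_one]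
  have hQUα : (Q U).toReal ≤ α := by
    have := ENNReal.toReal_mono ENNReal.ofReal_ne_top hUbound
    rwa [ENNReal.toReal_ofReal hα0.le] at this
  refine le_trans ?_ (ENNReal.toReal_mono (measure_ne_top Q _) (measure_mono hsubset))
  rw [hUc]
  linarith
end

section
/- Let π be a feasible policy, let e(x, a1, a2) = μ1(a1|x) μ2(a2|x, a1) denote the true joint logging propensity, and let q̂ and ê be fixed measurable functions on 𝒳 × A1 × A2 with ê(x, a1, a2) ≥ ν̂² > 0 for all x, a1 ∈ A1, and a2 ∈ S(x, a1). Suppose Y and the reward regression q are bounded and that the sup-norms ‖q̂ − q‖_∞ and ‖ê − e‖_∞, taken over the feasible support {(x, a1, a2) : a2 ∈ S(x, a1)}, are finite. Define the estimated-propensity doubly robust score ψ̂_π(O) = m_{q̂}(X; π) + [π1(A1|X) π2(A2|X, A1) / ê(X, A1, A2)] · (Y − q̂(X, A1, A2)), where m_{q̂}(x; π) = Σ_{a1∈A1} π1(a1|x) Σ_{a2∈S(x,a1)} π2(a2|x, a1) q̂(x, a1, a2). Then the conditional value bias satisfies |E[ψ̂_π(O)] − V(π)| ≤ ν̂⁻²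 · ‖q̂ − q‖_∞ · ‖ê − e‖_∞. -/
open MeasureTheory ProbabilityTheory

private lemma aux_integrable_of_bound {α : Type*} [MeasurableSpace α] (ν : MeasureTheory.Measure α)
    [MeasureTheory.IsFiniteMeasure ν] (f : α → ℝ) (C : ℝ)
    (hf : MeasureTheory.AEStronglyMeasurable f ν) (hb : ∀ᵐ x ∂ν, |f x| ≤ C) :
    MeasureTheory.Integrable f ν :=
  (MeasureTheory.integrable_const C).mono' hf
    (hb.mono fun x h => by simpa [Real.norm_eq_abs] using h)


/-- **Product-error structure of the doubly robust value bias.**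
Let `π` be a feasible policy, `e(x,a1,a2) = μ1(a1|x) μ2(a2|x,a1)` the true
joint logging propensity, and `q̂`, `ê` fixed measurable nuisance fits with
`ê ≥ ν̂² > 0` on the feasible support. Suppose `Y` and the reward regression
`q` are bounded and the sup-norms `‖q̂ - q‖_∞` and `‖ê - e‖_∞` over the
feasible support (formalized as `sSup` of the corresponding sets of absolute
deviations, assumed bounded above) are finite. Then the estimated-propensity
doubly robust score
`ψ̂_π(O) = m_q̂(X; π) + (π1(A1|X) π2(A2|X,A1) / ê(X,A1,A2)) (Y - q̂(X,A1,A2))`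
has value bias `|E[ψ̂_π(O)] - V(π)| ≤ ν̂⁻² ‖q̂ - q‖_∞ ‖ê - e‖_∞`. -/
theorem stmt14
    {𝒳 : Type*} [m𝒳 : MeasurableSpace 𝒳] (P : Measure 𝒳) [IsProbabilityMeasure P]
    {A1 A2 : Type*} [Fintype A1] [Nonempty A1] [Fintype A2] [Nonempty A2]
    [DecidableEq A1] [DecidableEq A2]
    [MeasurableSpace A1] [MeasurableSingletonClass A1]
    [MeasurableSpace A2] [MeasurableSingletonClass A2]
    (S : 𝒳 → A1 → Finset A2) (hS : ∀ x a1, (S x a1).Nonempty)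
    (hSmeas : ∀ (a1 : A1) (a2 : A2), MeasurableSet {x | a2 ∈ S x a1})
    (π1 : 𝒳 → A1 → ℝ) (π2 : 𝒳 → A1 → A2 → ℝ)
    (hπ1meas : ∀ a1, Measurable fun x => π1 x a1)
    (hπ2meas : ∀ a1 a2, Measurable fun x => π2 x a1 a2)
    (hπ1nn : ∀ x a1, 0 ≤ π1 x a1) (hπ1sum : ∀ x, ∑ a1, π1 x a1 = 1)
    (hπ2nn : ∀ x a1 a2, 0 ≤ π2 x a1 a2) (hπ2sum : ∀ x a1, ∑ a2, π2 x a1 a2 = 1)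
    (hπ2supp : ∀ x a1 a2, a2 ∉ S x a1 → π2 x a1 a2 = 0)
    (μ1 : 𝒳 → A1 → ℝ) (μ2 : 𝒳 → A1 → A2 → ℝ)
    (hμ1meas : ∀ a1, Measurable fun x => μ1 x a1)
    (hμ2meas : ∀ a1 a2, Measurable fun x => μ2 x a1 a2)
    (hμ1nn : ∀ x a1, 0 ≤ μ1 x a1) (hμ1sum : ∀ x, ∑ a1, μ1 x a1 = 1)
    (hμ2nn : ∀ x a1 a2, 0 ≤ μ2 x a1 a2) (hμ2sum : ∀ x a1, ∑ a2, μ2 x a1 a2 = 1)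
    (hμ2supp : ∀ x a1 a2, a2 ∉ S x a1 → μ2 x a1 a2 = 0)
    (hμ1pos : ∀ x a1, 0 < μ1 x a1)
    (hμ2pos : ∀ x a1 a2, a2 ∈ S x a1 → 0 < μ2 x a1 a2)
    (q : 𝒳 → A1 → A2 → ℝ)
    (hqmeas : ∀ a1 a2, Measurable fun x => q x a1 a2)
    (Cq : ℝ) (hqbd : ∀ x a1 a2, |q x a1 a2| ≤ Cq)
    (qhat : 𝒳 → A1 → A2 → ℝ)
    (hqhatmeas : ∀ a1 a2, Measurable fun x => qhat x a1 a2)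
    (ehat : 𝒳 → A1 → A2 → ℝ)
    (hehatmeas : ∀ a1 a2, Measurable fun x => ehat x a1 a2)
    (νhat : ℝ) (hν : 0 < νhat)
    (hehatlb : ∀ x a1, ∀ a2 ∈ S x a1, νhat ^ 2 ≤ ehat x a1 a2)
    (hqgap : BddAbove {r : ℝ | ∃ x a1 a2, a2 ∈ S x a1 ∧
      r = |qhat x a1 a2 - q x a1 a2|})
    (hegap : BddAbove {r : ℝ | ∃ x a1 a2, a2 ∈ S x a1 ∧
      r = |ehat x a1 a2 - μ1 x a1 * μ2 x a1 a2|})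
    {Ω : Type*} [MeasurableSpace Ω] (Q : Measure Ω) [IsProbabilityMeasure Q]
    (X : Ω → 𝒳) (A1v : Ω → A1) (A2v : Ω → A2) (Y : Ω → ℝ)
    (hX : Measurable X) (hA1v : Measurable A1v) (hA2v : Measurable A2v)
    (hYm : Measurable Y)
    (CY : ℝ) (hYbd : ∀ᵐ ω ∂Q, |Y ω| ≤ CY)
    (hlaw : ∀ (a1 : A1) (a2 : A2) (h : 𝒳 → ℝ), Measurable h →
      (∃ C, ∀ x, |h x| ≤ C) →
      ∫ ω, (if A1v ω = a1 ∧ A2v ω = a2 then h (X ω) else 0) ∂Q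
        = ∫ x, μ1 x a1 * μ2 x a1 a2 * h x ∂P)
    (hlawY : ∀ (a1 : A1) (a2 : A2) (h : 𝒳 → ℝ), Measurable h →
      (∃ C, ∀ x, |h x| ≤ C) →
      ∫ ω, (if A1v ω = a1 ∧ A2v ω = a2 then Y ω * h (X ω) else 0) ∂Q
        = ∫ x, μ1 x a1 * μ2 x a1 a2 * q x a1 a2 * h x ∂P) :
    |(∫ ω, ((∑ a1, π1 (X ω) a1 *
          ∑ a2 ∈ S (X ω) a1, π2 (X ω) a1 a2 * qhat (X ω) a1 a2) +
        π1 (X ω) (A1v ω) * π2 (X ω) (A1v ω) (A2v ω) /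
          ehat (X ω) (A1v ω) (A2v ω) *
          (Y ω - qhat (X ω) (A1v ω) (A2v ω))) ∂Q) -
      ∫ x, ∑ a1, π1 x a1 * ∑ a2 ∈ S x a1, π2 x a1 a2 * q x a1 a2 ∂P|
    ≤ (νhat ^ 2)⁻¹ *
        sSup {r : ℝ | ∃ x a1 a2, a2 ∈ S x a1 ∧
          r = |qhat x a1 a2 - q x a1 a2|} *
        sSup {r : ℝ | ∃ x a1 a2, a2 ∈ S x a1 ∧
          r = |ehat x a1 a2 - μ1 x a1 * μ2 x a1 a2|} := by
  
  classical
  obtain ⟨x0⟩ : Nonempty 𝒳 := by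
    by_contra hcon
    rw [not_nonempty_iff] at hcon
    have h1 : P Set.univ = 1 := measure_univ
    rw [Set.univ_eq_empty_iff.mpr hcon] at h1
    simp at h1
  obtain ⟨b0, hb0⟩ := hS x0 (Classical.arbitrary A1)
  set Δq := sSup {r : ℝ | ∃ x a1 a2, a2 ∈ S x a1 ∧ r = |qhat x a1 a2 - q x a1 a2|} with hΔqdef
  set Δe := sSup {r : ℝ | ∃ x a1 a2, a2 ∈ S x a1 ∧
      r = |ehat x a1 a2 - μ1 x a1 * μ2 x a1 a2|} with hΔedef
  have hΔq_le : ∀ x a1 a2, a2 ∈ S x a1 → |qhat x a1 a2 - q x a1 a2| ≤ Δq :=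
    fun x a1 a2 h => le_csSup hqgap ⟨x, a1, a2, h, rfl⟩
  have hΔe_le : ∀ x a1 a2, a2 ∈ S x a1 → |ehat x a1 a2 - μ1 x a1 * μ2 x a1 a2| ≤ Δe :=
    fun x a1 a2 h => le_csSup hegap ⟨x, a1, a2, h, rfl⟩
  have hΔq0 : 0 ≤ Δq := le_trans (abs_nonneg _) (hΔq_le _ _ _ hb0)
  have hΔe0 : 0 ≤ Δe := le_trans (abs_nonneg _) (hΔe_le _ _ _ hb0)
  have hCq0 : 0 ≤ Cq := le_trans (abs_nonneg _) (hqbd x0 (Classical.arbitrary A1) b0)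
  have hν2 : (0:ℝ) < νhat ^ 2 := by positivity
  have hπ1le : ∀ x a1, π1 x a1 ≤ 1 := fun x a1 => by
    have := Finset.single_le_sum (f := fun a => π1 x a) (fun i _ => hπ1nn x i) (Finset.mem_univ a1)
    simpa [hπ1sum x] using this
  have hπ2le : ∀ x a1 a2, π2 x a1 a2 ≤ 1 := fun x a1 a2 => by
    have := Finset.single_le_sum (f := fun a => π2 x a1 a) (fun i _ => hπ2nn x a1 i)
      (Finset.mem_univ a2)
    simpa [hπ2sum x a1] using this
  have hμ1le : ∀ x a1, μ1 x a1 ≤ 1 := fun x a1 => by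
    have := Finset.single_le_sum (f := fun a => μ1 x a) (fun i _ => hμ1nn x i) (Finset.mem_univ a1)
    simpa [hμ1sum x] using this
  have hμ2le : ∀ x a1 a2, μ2 x a1 a2 ≤ 1 := fun x a1 a2 => by
    have := Finset.single_le_sum (f := fun a => μ2 x a1 a) (fun i _ => hμ2nn x a1 i)
      (Finset.mem_univ a2)
    simpa [hμ2sum x a1] using this
  -- abbreviations
  set H : A1 → A2 → 𝒳 → ℝ := fun a1 a2 x => π1 x a1 * π2 x a1 a2 / ehat x a1 a2 with hHdef
  set M : 𝒳 → ℝ := fun x => ∑ a1, π1 x a1 * ∑ a2, π2 x a1 a2 * qhat x a1 a2 with hMdef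
  -- rewrite feasible-set sums as full sums
  have hsumSq : ∀ x a1,
      (∑ a2 ∈ S x a1, π2 x a1 a2 * qhat x a1 a2) = ∑ a2, π2 x a1 a2 * qhat x a1 a2 :=
    fun x a1 => (Finset.sum_subset (Finset.subset_univ _)
      (fun a2 _ hnot => by rw [hπ2supp x a1 a2 hnot, zero_mul]))
  have hsumSq' : ∀ x a1,
      (∑ a2 ∈ S x a1, π2 x a1 a2 * q x a1 a2) = ∑ a2, π2 x a1 a2 * q x a1 a2 :=
    fun x a1 => (Finset.sum_subset (Finset.subset_univ _)
      (fun a2 _ hnot => by rw [hπ2supp x a1 a2 hnot, zero_mul]))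
  simp only [hsumSq, hsumSq']
  -- basic bounds
  have hH0 : ∀ a1 a2 x, a2 ∉ S x a1 → H a1 a2 x = 0 := fun a1 a2 x h => by
    simp [hHdef, hπ2supp x a1 a2 h]
  have hHbd : ∀ a1 a2 x, |H a1 a2 x| ≤ (νhat ^ 2)⁻¹ := by
    intro a1 a2 x
    by_cases hmem : a2 ∈ S x a1
    · have h1 : (0:ℝ) ≤ π1 x a1 * π2 x a1 a2 := mul_nonneg (hπ1nn x a1) (hπ2nn x a1 a2)
      have h2 : π1 x a1 * π2 x a1 a2 ≤ 1 :=
        mul_le_one₀ (hπ1le x a1) (hπ2nn x a1 a2) (hπ2le x a1 a2)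
      have h3 : (0:ℝ) < ehat x a1 a2 := lt_of_lt_of_le hν2 (hehatlb x a1 a2 hmem)
      have : H a1 a2 x = π1 x a1 * π2 x a1 a2 / ehat x a1 a2 := by rw [hHdef]
      rw [this, abs_of_nonneg (div_nonneg h1 h3.le)]
      calc π1 x a1 * π2 x a1 a2 / ehat x a1 a2 ≤ 1 / νhat ^ 2 :=
            div_le_div₀ zero_le_one h2 hν2 (hehatlb x a1 a2 hmem)
        _ = (νhat ^ 2)⁻¹ := one_div _
    · rw [hH0 a1 a2 x hmem, abs_zero]
      positivity
  have hqhatbd : ∀ x a1 a2, a2 ∈ S x a1 → |qhat x a1 a2| ≤ Cq + Δq := by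
    intro x a1 a2 hm
    calc |qhat x a1 a2| = |q x a1 a2 + (qhat x a1 a2 - q x a1 a2)| := by ring_nf
      _ ≤ |q x a1 a2| + |qhat x a1 a2 - q x a1 a2| := abs_add_le _ _
      _ ≤ Cq + Δq := add_le_add (hqbd x a1 a2) (hΔq_le x a1 a2 hm)
  have hHqbd : ∀ a1 a2 x, |H a1 a2 x * qhat x a1 a2| ≤ (νhat ^ 2)⁻¹ * (Cq + Δq) := by
    intro a1 a2 x
    by_cases hmem : a2 ∈ S x a1
    · rw [abs_mul]
      exact mul_le_mul (hHbd a1 a2 x) (hqhatbd x a1 a2 hmem) (abs_nonneg _)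
        (by positivity)
    · rw [hH0 a1 a2 x hmem, zero_mul, abs_zero]
      positivity
  have hinner : ∀ x a1, |∑ a2, π2 x a1 a2 * qhat x a1 a2| ≤ Cq + Δq := by
    intro x a1
    calc |∑ a2, π2 x a1 a2 * qhat x a1 a2| ≤ ∑ a2, |π2 x a1 a2 * qhat x a1 a2| :=
          Finset.abs_sum_le_sum_abs _ _
      _ ≤ ∑ a2, π2 x a1 a2 * (Cq + Δq) := by
          refine Finset.sum_le_sum (fun a2 _ => ?_)
          by_cases hm : a2 ∈ S x a1
          · rw [abs_mul, abs_of_nonneg (hπ2nn x a1 a2)]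
            exact mul_le_mul_of_nonneg_left (hqhatbd x a1 a2 hm) (hπ2nn x a1 a2)
          · rw [hπ2supp x a1 a2 hm, zero_mul, abs_zero, zero_mul]
      _ = Cq + Δq := by rw [← Finset.sum_mul, hπ2sum x a1, one_mul]
  have hMbd : ∀ x, |M x| ≤ Cq + Δq := by
    intro x
    have : M x = ∑ a1, π1 x a1 * ∑ a2, π2 x a1 a2 * qhat x a1 a2 := by rw [hMdef]
    rw [this]
    calc |∑ a1, π1 x a1 * ∑ a2, π2 x a1 a2 * qhat x a1 a2|
        ≤ ∑ a1, |π1 x a1 * ∑ a2, π2 x a1 a2 * qhat x a1 a2| := Finset.abs_sum_le_sum_abs _ _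
      _ ≤ ∑ a1, π1 x a1 * (Cq + Δq) := by
          refine Finset.sum_le_sum (fun a1 _ => ?_)
          rw [abs_mul, abs_of_nonneg (hπ1nn x a1)]
          exact mul_le_mul_of_nonneg_left (hinner x a1) (hπ1nn x a1)
      _ = Cq + Δq := by rw [← Finset.sum_mul, hπ1sum x, one_mul]
  have hinnerq : ∀ x a1, |∑ a2, π2 x a1 a2 * q x a1 a2| ≤ Cq := by
    intro x a1
    calc |∑ a2, π2 x a1 a2 * q x a1 a2| ≤ ∑ a2, |π2 x a1 a2 * q x a1 a2| :=
          Finset.abs_sum_le_sum_abs _ _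
      _ ≤ ∑ a2, π2 x a1 a2 * Cq := by
          refine Finset.sum_le_sum (fun a2 _ => ?_)
          rw [abs_mul, abs_of_nonneg (hπ2nn x a1 a2)]
          exact mul_le_mul_of_nonneg_left (hqbd x a1 a2) (hπ2nn x a1 a2)
      _ = Cq := by rw [← Finset.sum_mul, hπ2sum x a1, one_mul]
  have hMqbd : ∀ x, |∑ a1, π1 x a1 * ∑ a2, π2 x a1 a2 * q x a1 a2| ≤ Cq := by
    intro x
    calc |∑ a1, π1 x a1 * ∑ a2, π2 x a1 a2 * q x a1 a2|
        ≤ ∑ a1, |π1 x a1 * ∑ a2, π2 x a1 a2 * q x a1 a2| := Finset.abs_sum_le_sum_abs _ _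
      _ ≤ ∑ a1, π1 x a1 * Cq := by
          refine Finset.sum_le_sum (fun a1 _ => ?_)
          rw [abs_mul, abs_of_nonneg (hπ1nn x a1)]
          exact mul_le_mul_of_nonneg_left (hinnerq x a1) (hπ1nn x a1)
      _ = Cq := by rw [← Finset.sum_mul, hπ1sum x, one_mul]
  -- measurability
  have hHmeas : ∀ a1 a2, Measurable (H a1 a2) := fun a1 a2 => by
    rw [hHdef]; exact ((hπ1meas a1).mul (hπ2meas a1 a2)).div (hehatmeas a1 a2)
  have hMmeas : Measurable M := by
    rw [hMdef]
    exact Finset.measurable_sum _ (fun a1 _ => (hπ1meas a1).mul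
      (Finset.measurable_sum _ (fun a2 _ => (hπ2meas a1 a2).mul (hqhatmeas a1 a2))))
  have hMqmeas : Measurable (fun x => ∑ a1, π1 x a1 * ∑ a2, π2 x a1 a2 * q x a1 a2) :=
    Finset.measurable_sum _ (fun a1 _ => (hπ1meas a1).mul
      (Finset.measurable_sum _ (fun a2 _ => (hπ2meas a1 a2).mul (hqmeas a1 a2))))
  have hsetmeas : ∀ p : A1 × A2, MeasurableSet {ω | A1v ω = p.1 ∧ A2v ω = p.2} :=
    fun p => (hA1v (measurableSet_singleton p.1)).inter (hA2v (measurableSet_singleton p.2))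
  -- integrability on Ω
  have hITY : ∀ p : A1 × A2, Integrable
      (fun ω => if A1v ω = p.1 ∧ A2v ω = p.2 then Y ω * H p.1 p.2 (X ω) else 0) Q := by
    intro p
    refine aux_integrable_of_bound Q _ (|CY| * (νhat ^ 2)⁻¹)
      ((Measurable.ite (hsetmeas p) (hYm.mul ((hHmeas p.1 p.2).comp hX))
        measurable_const).aestronglyMeasurable) ?_
    filter_upwards [hYbd] with ω hY
    by_cases hc : A1v ω = p.1 ∧ A2v ω = p.2
    · rw [if_pos hc, abs_mul]
      exact mul_le_mul (le_trans hY (le_abs_self CY)) (hHbd p.1 p.2 (X ω)) (abs_nonneg _)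
        (abs_nonneg _)
    · rw [if_neg hc, abs_zero]
      positivity
  have hIT0 : ∀ p : A1 × A2, Integrable
      (fun ω => if A1v ω = p.1 ∧ A2v ω = p.2 then
        M (X ω) - H p.1 p.2 (X ω) * qhat (X ω) p.1 p.2 else 0) Q := by
    intro p
    refine aux_integrable_of_bound Q _ ((Cq + Δq) + (νhat ^ 2)⁻¹ * (Cq + Δq))
      ((Measurable.ite (hsetmeas p) ((hMmeas.comp hX).sub
        (((hHmeas p.1 p.2).comp hX).mul ((hqhatmeas p.1 p.2).comp hX)))
        measurable_const).aestronglyMeasurable) ?_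
    refine Filter.Eventually.of_forall (fun ω => ?_)
    by_cases hc : A1v ω = p.1 ∧ A2v ω = p.2
    · rw [if_pos hc]
      calc |M (X ω) - H p.1 p.2 (X ω) * qhat (X ω) p.1 p.2|
          ≤ |M (X ω)| + |H p.1 p.2 (X ω) * qhat (X ω) p.1 p.2| := abs_sub _ _
        _ ≤ (Cq + Δq) + (νhat ^ 2)⁻¹ * (Cq + Δq) :=
            add_le_add (hMbd (X ω)) (hHqbd p.1 p.2 (X ω))
    · rw [if_neg hc, abs_zero]
      positivity
  -- integrability on 𝒳 of P-side pieces
  have hIP1 : ∀ p : A1 × A2, Integrable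
      (fun x => μ1 x p.1 * μ2 x p.1 p.2 * q x p.1 p.2 * H p.1 p.2 x) P := by
    intro p
    refine aux_integrable_of_bound P _ (Cq * (νhat ^ 2)⁻¹)
      ((((hμ1meas p.1).mul (hμ2meas p.1 p.2)).mul (hqmeas p.1 p.2)).mul
        (hHmeas p.1 p.2)).aestronglyMeasurable ?_
    refine Filter.Eventually.of_forall (fun x => ?_)
    have hμμ : |μ1 x p.1 * μ2 x p.1 p.2| ≤ 1 := by
      rw [abs_of_nonneg (mul_nonneg (hμ1nn x p.1) (hμ2nn x p.1 p.2))]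
      exact mul_le_one₀ (hμ1le x p.1) (hμ2nn x p.1 p.2) (hμ2le x p.1 p.2)
    calc |μ1 x p.1 * μ2 x p.1 p.2 * q x p.1 p.2 * H p.1 p.2 x|
        = |μ1 x p.1 * μ2 x p.1 p.2| * |q x p.1 p.2| * |H p.1 p.2 x| := by
          rw [abs_mul, abs_mul]
      _ ≤ 1 * Cq * (νhat ^ 2)⁻¹ := by
          exact mul_le_mul (mul_le_mul hμμ (hqbd x p.1 p.2) (abs_nonneg _) zero_le_one)
            (hHbd p.1 p.2 x) (abs_nonneg _) (by positivity)
      _ = Cq * (νhat ^ 2)⁻¹ := by rw [one_mul]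
  have hIP2 : ∀ p : A1 × A2, Integrable
      (fun x => μ1 x p.1 * μ2 x p.1 p.2 * (M x - H p.1 p.2 x * qhat x p.1 p.2)) P := by
    intro p
    refine aux_integrable_of_bound P _ ((Cq + Δq) + (νhat ^ 2)⁻¹ * (Cq + Δq))
      (((hμ1meas p.1).mul (hμ2meas p.1 p.2)).mul (hMmeas.sub
        ((hHmeas p.1 p.2).mul (hqhatmeas p.1 p.2)))).aestronglyMeasurable ?_
    refine Filter.Eventually.of_forall (fun x => ?_)
    have hμμ : |μ1 x p.1 * μ2 x p.1 p.2| ≤ 1 := by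
      rw [abs_of_nonneg (mul_nonneg (hμ1nn x p.1) (hμ2nn x p.1 p.2))]
      exact mul_le_one₀ (hμ1le x p.1) (hμ2nn x p.1 p.2) (hμ2le x p.1 p.2)
    calc |μ1 x p.1 * μ2 x p.1 p.2 * (M x - H p.1 p.2 x * qhat x p.1 p.2)|
        = |μ1 x p.1 * μ2 x p.1 p.2| * |M x - H p.1 p.2 x * qhat x p.1 p.2| := abs_mul _ _
      _ ≤ 1 * ((Cq + Δq) + (νhat ^ 2)⁻¹ * (Cq + Δq)) := by
          refine mul_le_mul hμμ ?_ (abs_nonneg _) zero_le_one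
          calc |M x - H p.1 p.2 x * qhat x p.1 p.2|
              ≤ |M x| + |H p.1 p.2 x * qhat x p.1 p.2| := abs_sub _ _
            _ ≤ (Cq + Δq) + (νhat ^ 2)⁻¹ * (Cq + Δq) := add_le_add (hMbd x) (hHqbd p.1 p.2 x)
      _ = (Cq + Δq) + (νhat ^ 2)⁻¹ * (Cq + Δq) := one_mul _
  have hIPφ : ∀ p : A1 × A2, Integrable
      (fun x => μ1 x p.1 * μ2 x p.1 p.2 *
        (q x p.1 p.2 * H p.1 p.2 x + (M x - H p.1 p.2 x * qhat x p.1 p.2))) P := by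
    intro p
    have hadd : Integrable (fun x => μ1 x p.1 * μ2 x p.1 p.2 * q x p.1 p.2 * H p.1 p.2 x +
        μ1 x p.1 * μ2 x p.1 p.2 * (M x - H p.1 p.2 x * qhat x p.1 p.2)) P :=
      (hIP1 p).add (hIP2 p)
    exact hadd.congr (Filter.Eventually.of_forall (fun x => by ring))
  -- pointwise decomposition of the Ω-integrand
  have hpt : ∀ ω, ((∑ a1, π1 (X ω) a1 * ∑ a2, π2 (X ω) a1 a2 * qhat (X ω) a1 a2) +
        π1 (X ω) (A1v ω) * π2 (X ω) (A1v ω) (A2v ω) / ehat (X ω) (A1v ω) (A2v ω) *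
          (Y ω - qhat (X ω) (A1v ω) (A2v ω)))
      = ∑ p : A1 × A2,
          ((if A1v ω = p.1 ∧ A2v ω = p.2 then Y ω * H p.1 p.2 (X ω) else 0) +
           (if A1v ω = p.1 ∧ A2v ω = p.2 then
              M (X ω) - H p.1 p.2 (X ω) * qhat (X ω) p.1 p.2 else 0)) := by
    intro ω
    have hcomb : ∀ p : A1 × A2,
        ((if A1v ω = p.1 ∧ A2v ω = p.2 then Y ω * H p.1 p.2 (X ω) else 0) +
         (if A1v ω = p.1 ∧ A2v ω = p.2 then
            M (X ω) - H p.1 p.2 (X ω) * qhat (X ω) p.1 p.2 else 0))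
        = (if A1v ω = p.1 ∧ A2v ω = p.2 then
            M (X ω) + H p.1 p.2 (X ω) * (Y ω - qhat (X ω) p.1 p.2) else 0) := by
      intro p
      split_ifs with hc
      · ring
      · rw [add_zero]
    rw [Finset.sum_congr rfl (fun p _ => hcomb p)]
    rw [Finset.sum_eq_single_of_mem (A1v ω, A2v ω) (Finset.mem_univ _)
      (fun p _ hp => if_neg (fun hc => hp (Prod.ext_iff.mpr ⟨hc.1.symm, hc.2.symm⟩)))]
    rw [if_pos ⟨rfl, rfl⟩]
  -- per-pair integral identity
  have hterm : ∀ p : A1 × A2,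
      (∫ ω, ((if A1v ω = p.1 ∧ A2v ω = p.2 then Y ω * H p.1 p.2 (X ω) else 0) +
        (if A1v ω = p.1 ∧ A2v ω = p.2 then
          M (X ω) - H p.1 p.2 (X ω) * qhat (X ω) p.1 p.2 else 0)) ∂Q)
      = ∫ x, μ1 x p.1 * μ2 x p.1 p.2 *
          (q x p.1 p.2 * H p.1 p.2 x + (M x - H p.1 p.2 x * qhat x p.1 p.2)) ∂P := by
    intro p
    have hYeq : (∫ ω, (if A1v ω = p.1 ∧ A2v ω = p.2 then Y ω * H p.1 p.2 (X ω) else 0) ∂Q)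
        = ∫ x, μ1 x p.1 * μ2 x p.1 p.2 * q x p.1 p.2 * H p.1 p.2 x ∂P :=
      hlawY p.1 p.2 (H p.1 p.2) (hHmeas p.1 p.2) ⟨(νhat ^ 2)⁻¹, hHbd p.1 p.2⟩
    have h0eq : (∫ ω, (if A1v ω = p.1 ∧ A2v ω = p.2 then
          M (X ω) - H p.1 p.2 (X ω) * qhat (X ω) p.1 p.2 else 0) ∂Q)
        = ∫ x, μ1 x p.1 * μ2 x p.1 p.2 * (M x - H p.1 p.2 x * qhat x p.1 p.2) ∂P :=
      hlaw p.1 p.2 (fun x => M x - H p.1 p.2 x * qhat x p.1 p.2)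
        (hMmeas.sub ((hHmeas p.1 p.2).mul (hqhatmeas p.1 p.2)))
        ⟨(Cq + Δq) + (νhat ^ 2)⁻¹ * (Cq + Δq), fun x =>
          le_trans (abs_sub _ _) (add_le_add (hMbd x) (hHqbd p.1 p.2 x))⟩
    rw [integral_add (hITY p) (hIT0 p), hYeq, h0eq, ← integral_add (hIP1 p) (hIP2 p)]
    exact integral_congr_ae (Filter.Eventually.of_forall (fun x => by ring))
  -- main identity for the Ω-integral
  have hI : (∫ ω, ((∑ a1, π1 (X ω) a1 * ∑ a2, π2 (X ω) a1 a2 * qhat (X ω) a1 a2) +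
        π1 (X ω) (A1v ω) * π2 (X ω) (A1v ω) (A2v ω) / ehat (X ω) (A1v ω) (A2v ω) *
          (Y ω - qhat (X ω) (A1v ω) (A2v ω))) ∂Q)
      = ∫ x, ∑ p : A1 × A2, μ1 x p.1 * μ2 x p.1 p.2 *
          (q x p.1 p.2 * H p.1 p.2 x + (M x - H p.1 p.2 x * qhat x p.1 p.2)) ∂P := by
    have hQint : ∀ p : A1 × A2, Integrable (fun ω =>
        (if A1v ω = p.1 ∧ A2v ω = p.2 then Y ω * H p.1 p.2 (X ω) else 0) +
        (if A1v ω = p.1 ∧ A2v ω = p.2 then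
          M (X ω) - H p.1 p.2 (X ω) * qhat (X ω) p.1 p.2 else 0)) Q :=
      fun p => (hITY p).add (hIT0 p)
    simp only [hpt]
    rw [integral_finset_sum _ (fun p _ => hQint p)]
    rw [Finset.sum_congr rfl (fun p _ => hterm p)]
    rw [← integral_finset_sum _ (fun p _ => hIPφ p)]
  rw [hI]
  -- combine the two P-integrals
  have hIΦ : Integrable (fun x => ∑ p : A1 × A2, μ1 x p.1 * μ2 x p.1 p.2 *
      (q x p.1 p.2 * H p.1 p.2 x + (M x - H p.1 p.2 x * qhat x p.1 p.2))) P :=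
    integrable_finset_sum _ (fun p _ => hIPφ p)
  have hIMq : Integrable (fun x => ∑ a1, π1 x a1 * ∑ a2, π2 x a1 a2 * q x a1 a2) P :=
    aux_integrable_of_bound P _ Cq hMqmeas.aestronglyMeasurable
      (Filter.Eventually.of_forall hMqbd)
  rw [← integral_sub hIΦ hIMq]
  -- pointwise bound of the difference
  have hM1 : ∀ x, (∑ p : A1 × A2, μ1 x p.1 * μ2 x p.1 p.2) = 1 := by
    intro x
    rw [Fintype.sum_prod_type]
    have h1 : ∀ a1, (∑ a2, μ1 x a1 * μ2 x a1 a2) = μ1 x a1 := fun a1 => by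
      rw [← Finset.mul_sum, hμ2sum x a1, mul_one]
    rw [Finset.sum_congr rfl (fun a1 _ => h1 a1), hμ1sum x]
  have hπprod : ∀ x, (∑ p : A1 × A2, π1 x p.1 * π2 x p.1 p.2) = 1 := by
    intro x
    rw [Fintype.sum_prod_type]
    have h1 : ∀ a1, (∑ a2, π1 x a1 * π2 x a1 a2) = π1 x a1 := fun a1 => by
      rw [← Finset.mul_sum, hπ2sum x a1, mul_one]
    rw [Finset.sum_congr rfl (fun a1 _ => h1 a1), hπ1sum x]
  have hMq_eq : ∀ x, (∑ a1, π1 x a1 * ∑ a2, π2 x a1 a2 * q x a1 a2)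
      = ∑ p : A1 × A2, π1 x p.1 * π2 x p.1 p.2 * q x p.1 p.2 := by
    intro x
    rw [Fintype.sum_prod_type]
    refine Finset.sum_congr rfl (fun a1 _ => ?_)
    rw [Finset.mul_sum]
    exact Finset.sum_congr rfl (fun a2 _ => by ring)
  have hM_eq : ∀ x, M x = ∑ p : A1 × A2, π1 x p.1 * π2 x p.1 p.2 * qhat x p.1 p.2 := by
    intro x
    have : M x = ∑ a1, π1 x a1 * ∑ a2, π2 x a1 a2 * qhat x a1 a2 := by rw [hMdef]
    rw [this, Fintype.sum_prod_type]
    refine Finset.sum_congr rfl (fun a1 _ => ?_)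
    rw [Finset.mul_sum]
    exact Finset.sum_congr rfl (fun a2 _ => by ring)
  have hdiff : ∀ x, ((∑ p : A1 × A2, μ1 x p.1 * μ2 x p.1 p.2 *
        (q x p.1 p.2 * H p.1 p.2 x + (M x - H p.1 p.2 x * qhat x p.1 p.2)))
      - ∑ a1, π1 x a1 * ∑ a2, π2 x a1 a2 * q x a1 a2)
      = ∑ p : A1 × A2, (μ1 x p.1 * μ2 x p.1 p.2 * H p.1 p.2 x *
          (q x p.1 p.2 - qhat x p.1 p.2) +
          π1 x p.1 * π2 x p.1 p.2 * (qhat x p.1 p.2 - q x p.1 p.2)) := by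
    intro x
    have e1 : (∑ p : A1 × A2, μ1 x p.1 * μ2 x p.1 p.2 *
        (q x p.1 p.2 * H p.1 p.2 x + (M x - H p.1 p.2 x * qhat x p.1 p.2)))
        = (∑ p : A1 × A2, μ1 x p.1 * μ2 x p.1 p.2 * H p.1 p.2 x *
            (q x p.1 p.2 - qhat x p.1 p.2)) + M x := by
      rw [Finset.sum_congr rfl (fun (p : A1 × A2) _ =>
        show μ1 x p.1 * μ2 x p.1 p.2 *
            (q x p.1 p.2 * H p.1 p.2 x + (M x - H p.1 p.2 x * qhat x p.1 p.2))
          = μ1 x p.1 * μ2 x p.1 p.2 * H p.1 p.2 x * (q x p.1 p.2 - qhat x p.1 p.2) +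
            μ1 x p.1 * μ2 x p.1 p.2 * M x from by ring)]
      rw [Finset.sum_add_distrib, ← Finset.sum_mul, hM1 x, one_mul]
    rw [e1, hMq_eq x, hM_eq x, add_sub_assoc, ← Finset.sum_sub_distrib,
      ← Finset.sum_add_distrib]
    exact Finset.sum_congr rfl (fun p _ => by ring)
  have hptbd : ∀ x, |(∑ p : A1 × A2, μ1 x p.1 * μ2 x p.1 p.2 *
        (q x p.1 p.2 * H p.1 p.2 x + (M x - H p.1 p.2 x * qhat x p.1 p.2)))
      - ∑ a1, π1 x a1 * ∑ a2, π2 x a1 a2 * q x a1 a2|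
      ≤ (νhat ^ 2)⁻¹ * Δq * Δe := by
    intro x
    rw [hdiff x]
    have htb : ∀ p : A1 × A2, |μ1 x p.1 * μ2 x p.1 p.2 * H p.1 p.2 x *
        (q x p.1 p.2 - qhat x p.1 p.2) +
        π1 x p.1 * π2 x p.1 p.2 * (qhat x p.1 p.2 - q x p.1 p.2)|
        ≤ π1 x p.1 * π2 x p.1 p.2 * ((νhat ^ 2)⁻¹ * Δq * Δe) := by
      intro p
      by_cases hmem : p.2 ∈ S x p.1
      · have hE0 : (0:ℝ) < ehat x p.1 p.2 := lt_of_lt_of_le hν2 (hehatlb x p.1 p.2 hmem)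
        have ht : μ1 x p.1 * μ2 x p.1 p.2 * H p.1 p.2 x *
            (q x p.1 p.2 - qhat x p.1 p.2) +
            π1 x p.1 * π2 x p.1 p.2 * (qhat x p.1 p.2 - q x p.1 p.2)
            = (qhat x p.1 p.2 - q x p.1 p.2) * (π1 x p.1 * π2 x p.1 p.2) *
              ((ehat x p.1 p.2 - μ1 x p.1 * μ2 x p.1 p.2) / ehat x p.1 p.2) := by
          simp only [hHdef]
          field_simp
          ring
        rw [ht, abs_mul, abs_mul, abs_div,
          abs_of_nonneg (mul_nonneg (hπ1nn x p.1) (hπ2nn x p.1 p.2)),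
          abs_of_pos hE0]
        have h2 : |ehat x p.1 p.2 - μ1 x p.1 * μ2 x p.1 p.2| / ehat x p.1 p.2
            ≤ Δe / νhat ^ 2 :=
          div_le_div₀ hΔe0 (hΔe_le x p.1 p.2 hmem) hν2 (hehatlb x p.1 p.2 hmem)
        calc |qhat x p.1 p.2 - q x p.1 p.2| * (π1 x p.1 * π2 x p.1 p.2) *
              (|ehat x p.1 p.2 - μ1 x p.1 * μ2 x p.1 p.2| / ehat x p.1 p.2)
            ≤ Δq * (π1 x p.1 * π2 x p.1 p.2) * (Δe / νhat ^ 2) := by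
              refine mul_le_mul (mul_le_mul_of_nonneg_right (hΔq_le x p.1 p.2 hmem)
                (mul_nonneg (hπ1nn x p.1) (hπ2nn x p.1 p.2))) h2
                (div_nonneg (abs_nonneg _) hE0.le)
                (mul_nonneg hΔq0 (mul_nonneg (hπ1nn x p.1) (hπ2nn x p.1 p.2)))
          _ = π1 x p.1 * π2 x p.1 p.2 * ((νhat ^ 2)⁻¹ * Δq * Δe) := by
              field_simp
      · rw [hπ2supp x p.1 p.2 hmem, hμ2supp x p.1 p.2 hmem]
        simp
    calc |∑ p : A1 × A2, (μ1 x p.1 * μ2 x p.1 p.2 * H p.1 p.2 x *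
          (q x p.1 p.2 - qhat x p.1 p.2) +
          π1 x p.1 * π2 x p.1 p.2 * (qhat x p.1 p.2 - q x p.1 p.2))|
        ≤ ∑ p : A1 × A2, |μ1 x p.1 * μ2 x p.1 p.2 * H p.1 p.2 x *
          (q x p.1 p.2 - qhat x p.1 p.2) +
          π1 x p.1 * π2 x p.1 p.2 * (qhat x p.1 p.2 - q x p.1 p.2)| :=
          Finset.abs_sum_le_sum_abs _ _
      _ ≤ ∑ p : A1 × A2, π1 x p.1 * π2 x p.1 p.2 * ((νhat ^ 2)⁻¹ * Δq * Δe) :=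
          Finset.sum_le_sum (fun p _ => htb p)
      _ = (νhat ^ 2)⁻¹ * Δq * Δe := by rw [← Finset.sum_mul, hπprod x, one_mul]
  have hfinal := norm_integral_le_of_norm_le_const (μ := P)
    (C := (νhat ^ 2)⁻¹ * Δq * Δe)
    (f := fun x => (∑ p : A1 × A2, μ1 x p.1 * μ2 x p.1 p.2 *
        (q x p.1 p.2 * H p.1 p.2 x + (M x - H p.1 p.2 x * qhat x p.1 p.2)))
      - ∑ a1, π1 x a1 * ∑ a2, π2 x a1 a2 * q x a1 a2)
    (Filter.Eventually.of_forall (fun x => by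
      rw [Real.norm_eq_abs]; exact hptbd x))
  simpa [Real.norm_eq_abs, measure_univ] using hfinal
end
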